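/- Let v be a vertex of a monotone polytope P ⊆ ℝ^n such that every edge of P incident to v has lattice length at least n. Then every edge of P incident to v has lattice length equal to n or to n + 1. -/

import Mathlib

open Finset

/-- Real dot product of an integer vector with a real vector. -/
def dotZ {n : ℕ} (u : Fin n → ℤ) (x : Fin n → ℝ) : ℝ := ∑ i, (u i : ℝ) * x i

/-- Real dot product. -/
def dotR {n : ℕ} (u x : Fin n → ℝ) : ℝ := ∑ i, u i * x i

/-- A point of `ℝ^n` is a lattice point if all its coordinates are integers. -/
def IsLatticePt {n : ℕ} (x : Fin n → ℝ) : Prop := ∀ i, ∃ m : ℤ, x i = (m : ℝ)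

/-- A (full-dimensional) lattice polytope: the convex hull of a finite set of
lattice points whose affine span is all of `ℝ^n`. -/
def IsLatticePolytope {n : ℕ} (P : Set (Fin n → ℝ)) : Prop :=
  ∃ V : Finset (Fin n → ℝ), (∀ v ∈ V, IsLatticePt v) ∧
    P = convexHull ℝ (V : Set (Fin n → ℝ)) ∧ affineSpan ℝ P = ⊤

/-- `F` is an (exposed) face of `P`: the set of maximizers over `P` of some
linear functional. -/
def IsFaceOf {n : ℕ} (P F : Set (Fin n → ℝ)) : Prop :=
  ∃ u : Fin n → ℝ, F = {x ∈ P | ∀ y ∈ P, dotR u y ≤ dotR u x}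

/-- The dimension of a subset of `ℝ^n` (dimension of its affine hull). -/
noncomputable def dimSet {n : ℕ} (F : Set (Fin n → ℝ)) : ℕ :=
  Module.finrank ℝ (vectorSpan ℝ F)

/-- A facet of `P`: a nonempty face of dimension `n - 1`. -/
def IsFacetOf {n : ℕ} (P F : Set (Fin n → ℝ)) : Prop :=
  IsFaceOf P F ∧ F.Nonempty ∧ dimSet F + 1 = n

/-- A vertex of `P`: a point such that `{v}` is a face. -/
def IsVertexOf {n : ℕ} (P : Set (Fin n → ℝ)) (v : Fin n → ℝ) : Prop :=
  IsFaceOf P {v}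

/-- An edge of `P`: a face which is a nondegenerate segment. -/
def IsEdgeOf {n : ℕ} (P E : Set (Fin n → ℝ)) : Prop :=
  IsFaceOf P E ∧ ∃ a b : Fin n → ℝ, a ≠ b ∧ E = segment ℝ a b

/-- An integer vector is primitive if the gcd of its coordinates is 1. -/
def IsPrimitiveZ {n : ℕ} (u : Fin n → ℤ) : Prop := Finset.univ.gcd u = 1

/-- `u` is the primitive outer normal of the facet `F` of `P`. -/
def IsFacetNormal {n : ℕ} (P F : Set (Fin n → ℝ)) (u : Fin n → ℤ) : Prop :=
  IsPrimitiveZ u ∧ IsFacetOf P F ∧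
    F = {x ∈ P | ∀ y ∈ P, dotZ u y ≤ dotZ u x}

/-- `u` is the central normal vector of the face `G` of `P`: the sum of the
primitive outer normals of all the facets of `P` containing `G`. -/
def IsCentralNormal {n : ℕ} (P G : Set (Fin n → ℝ)) (u : Fin n → ℤ) : Prop :=
  ∃ (m : ℕ) (Fs : Fin m → Set (Fin n → ℝ)) (us : Fin m → Fin n → ℤ),
    Function.Injective Fs ∧
    (∀ i, G ⊆ Fs i ∧ IsFacetNormal P (Fs i) (us i)) ∧
    (∀ F, IsFacetOf P F → G ⊆ F → ∃ i, F = Fs i) ∧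
    u = ∑ i, us i

/-- The lattice length of the segment from `a` to `b`. -/
def LatticeLength {n : ℕ} (a b : Fin n → ℝ) (ℓ : ℕ) : Prop :=
  ∃ d : Fin n → ℤ, IsPrimitiveZ d ∧ ∀ i, b i - a i = (ℓ : ℝ) * (d i : ℝ)

/-- `d` is the primitive integer direction vector of the edge `E` at its
endpoint `v`, pointing away from `v`. -/
def EdgeDirAt {n : ℕ} (v : Fin n → ℝ) (E : Set (Fin n → ℝ)) (d : Fin n → ℤ) : Prop :=
  IsPrimitiveZ d ∧ ∃ w ∈ E, ∃ t : ℝ, 0 < t ∧ ∀ i, w i - v i = t * (d i : ℝ)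

/-- A polytope is smooth (Delzant) if every vertex lies in exactly `n` facets
and the primitive direction vectors of the `n` edges incident to each vertex
form a basis of the lattice `ℤ^n`. -/
def IsSmoothPolytope {n : ℕ} (P : Set (Fin n → ℝ)) : Prop :=
  ∀ v : Fin n → ℝ, IsVertexOf P v →
    (∃ Fs : Fin n → Set (Fin n → ℝ), Function.Injective Fs ∧
      (∀ i, IsFacetOf P (Fs i) ∧ v ∈ Fs i) ∧
      (∀ F, IsFacetOf P F → v ∈ F → ∃ i, F = Fs i)) ∧
    (∃ (E : Fin n → Set (Fin n → ℝ)) (d : Fin n → Fin n → ℤ),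
      Function.Injective E ∧
      (∀ i, IsEdgeOf P (E i) ∧ v ∈ E i ∧ EdgeDirAt v (E i) (d i)) ∧
      (∀ E', IsEdgeOf P E' → v ∈ E' → ∃ i, E' = E i) ∧
      IsUnit (Matrix.det (Matrix.of d)))

/-- A polytope is reflexive if the origin is in its interior and every facet is
supported at value `1` by its primitive outer normal. -/
def IsReflexivePolytope {n : ℕ} (P : Set (Fin n → ℝ)) : Prop :=
  (0 : Fin n → ℝ) ∈ interior P ∧
  ∀ F u, IsFacetNormal P F u → ∀ x ∈ F, dotZ u x = 1

/-- A monotone polytope (= smooth reflexive polytope). -/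
def IsMonotonePolytope {n : ℕ} (P : Set (Fin n → ℝ)) : Prop :=
  IsLatticePolytope P ∧ IsSmoothPolytope P ∧ IsReflexivePolytope P

/-- `F` is a nonempty face of `P` of codimension `k`. -/
def HasCodim {n : ℕ} (P F : Set (Fin n → ℝ)) (k : ℕ) : Prop :=
  IsFaceOf P F ∧ F.Nonempty ∧ dimSet F + k = n

/-- The monotone blow-up `P ∩ {x : u·x ≤ 1}` of a monotone polytope at a face
with central normal `u`. -/
def blowupSet {n : ℕ} (P : Set (Fin n → ℝ)) (u : Fin n → ℤ) : Set (Fin n → ℝ) :=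
  {x ∈ P | dotZ u x ≤ 1}

/-- The region removed from `P` by the monotone blow-up with central normal `u`. -/
def removedRegion {n : ℕ} (P : Set (Fin n → ℝ)) (u : Fin n → ℤ) : Set (Fin n → ℝ) :=
  {x ∈ P | 1 < dotZ u x}

/-- `P` admits a monotone blow-up at its face `F` with central normal `u`:
every vertex of `P` not in `F` satisfies `u·v ≤ 0`, and the blow-up is again a
monotone polytope. -/
def AdmitsMonotoneBlowup {n : ℕ} (P F : Set (Fin n → ℝ)) (u : Fin n → ℤ) : Prop :=
  IsCentralNormal P F u ∧
  (∀ v, IsVertexOf P v → v ∉ F → dotZ u v ≤ 0) ∧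
  IsMonotonePolytope (blowupSet P u)

/-- The monotone simplex `{x : x i ≥ -1 ∀ i, ∑ x i ≤ 1}` in `ℝ^n`. -/
def monotoneSimplex (n : ℕ) : Set (Fin n → ℝ) :=
  {x | (∀ i, -1 ≤ x i) ∧ ∑ i, x i ≤ 1}

/-- `AGL(n,ℤ)`-equivalence of subsets of `ℝ^n`: some map `x ↦ Ax + t` with
`A ∈ GL(n,ℤ)` and `t ∈ ℤ^n` maps `P` onto `Q`. -/
def AGLEquiv {n : ℕ} (P Q : Set (Fin n → ℝ)) : Prop :=
  ∃ (A : Matrix (Fin n) (Fin n) ℤ) (t : Fin n → ℤ), IsUnit A.det ∧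
    (fun x : Fin n → ℝ => fun i => (∑ j, (A i j : ℝ) * x j) + (t i : ℝ)) '' P = Q

namespace EdgeLen

variable {n : ℕ}

/-! ### dot product lemmas -/

/-- Integer dot product. -/
def intDot (u d : Fin n → ℤ) : ℤ := ∑ i, u i * d i

lemma dotZ_cast (u : Fin n → ℤ) (x : Fin n → ℝ) :
    dotZ u x = dotR (fun i => (u i : ℝ)) x := rfl

lemma dotZ_intDot (u d : Fin n → ℤ) :
    dotZ u (fun i => (d i : ℝ)) = (intDot u d : ℝ) := by
  simp [dotZ, intDot]

lemma dotR_comb (u a b : Fin n → ℝ) (s t : ℝ) :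
    dotR u (fun i => s * a i + t * b i) = s * dotR u a + t * dotR u b := by
  simp only [dotR, Finset.mul_sum]
  rw [← Finset.sum_add_distrib]
  congr 1; funext i; ring

lemma dotZ_comb (u : Fin n → ℤ) (a b : Fin n → ℝ) (s t : ℝ) :
    dotZ u (fun i => s * a i + t * b i) = s * dotZ u a + t * dotZ u b := by
  rw [dotZ_cast, dotZ_cast, dotZ_cast]; exact dotR_comb _ a b s t

lemma dotR_smul_right (u : Fin n → ℝ) (c : ℝ) (x : Fin n → ℝ) :
    dotR u (c • x) = c * dotR u x := by
  have h : (c • x) = fun i => c * x i + (0:ℝ) * x i := by funext i; simp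
  rw [h, dotR_comb]; ring

lemma dotZ_affine (u : Fin n → ℤ) (x c : Fin n → ℝ) (t : ℝ) :
    dotZ u (fun i => x i + t * c i) = dotZ u x + t * dotZ u c := by
  have h : (fun i => x i + t * c i) = fun i => (1:ℝ) * x i + t * c i := by
    funext i; ring
  rw [h, dotZ_comb]; ring

lemma dotR_sub_right (u a b : Fin n → ℝ) :
    dotR u (a - b) = dotR u a - dotR u b := by
  have h : (a - b) = fun i => (1:ℝ) * a i + (-1) * b i := by funext i; simp [Pi.sub_apply]; ring
  rw [h, dotR_comb]; ring

lemma dotR_add_smul_sub (u a b : Fin n → ℝ) (t : ℝ) :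
    dotR u (a + t • (b - a)) = dotR u a + t * (dotR u b - dotR u a) := by
  have h : (a + t • (b - a)) = fun i => (1 - t) * a i + t * b i := by
    funext i; simp [Pi.add_apply, Pi.smul_apply, Pi.sub_apply, smul_eq_mul]; ring
  rw [h, dotR_comb]; ring

lemma dotR_left_add (g g' x : Fin n → ℝ) (ε : ℝ) :
    dotR (g + ε • g') x = dotR g x + ε * dotR g' x := by
  simp only [dotR, Pi.add_apply, Pi.smul_apply, smul_eq_mul, Finset.mul_sum]
  rw [← Finset.sum_add_distrib]
  congr 1; funext i; ring

lemma dotR_left_neg_add (h f x : Fin n → ℝ) (μ : ℝ) :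
    dotR (-h + μ • f) x = -dotR h x + μ * dotR f x := by
  simp only [dotR, Pi.add_apply, Pi.neg_apply, Pi.smul_apply, smul_eq_mul, Finset.mul_sum,
    neg_mul, ← Finset.sum_neg_distrib]
  rw [← Finset.sum_add_distrib]
  congr 1; funext i; ring

lemma dotR_zero_left (x : Fin n → ℝ) : dotR (0 : Fin n → ℝ) x = 0 := by
  simp [dotR]

lemma dotR_self_pos {x : Fin n → ℝ} (hx : x ≠ 0) : 0 < dotR x x := by
  have h : ∃ i, x i ≠ 0 := by
    by_contra hc; push_neg at hc; exact hx (funext hc)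
  obtain ⟨i, hi⟩ := h
  exact Finset.sum_pos' (fun j _ => mul_self_nonneg (x j))
    ⟨i, Finset.mem_univ i, lt_of_le_of_ne (mul_self_nonneg (x i)) (Ne.symm (mul_self_ne_zero.mpr hi))⟩

lemma dotR_sum_smul {ι : Type*} (u : Fin n → ℝ) (s : Finset ι) (w : ι → ℝ) (f : ι → Fin n → ℝ) :
    dotR u (∑ y ∈ s, w y • f y) = ∑ y ∈ s, w y * dotR u (f y) := by
  simp only [dotR, Finset.sum_apply, Pi.smul_apply, smul_eq_mul, Finset.mul_sum]
  rw [Finset.sum_comm]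
  congr 1; funext i; congr 1; funext j; ring

lemma isLinearMap_dotR (u : Fin n → ℝ) : IsLinearMap ℝ (fun x => dotR u x) := by
  constructor
  · intro a b
    have h : (a + b) = fun i => (1:ℝ) * a i + (1:ℝ) * b i := by funext i; simp
    rw [h, dotR_comb]; ring
  · intro c a
    have h : (c • a) = fun i => c * a i + (0:ℝ) * a i := by funext i; simp
    rw [h, dotR_comb]; simp [smul_eq_mul]

/-! ### gcd / primitive vector lemmas -/

lemma gcd_nonneg_int (f : Fin n → ℤ) : 0 ≤ Finset.univ.gcd f := by
  have := Finset.normalize_gcd (s := Finset.univ) (f := f)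
  have habs := (Int.abs_eq_normalize (Finset.univ.gcd f)).symm
  rw [this] at habs
  rw [habs]; exact abs_nonneg _

lemma prim_exists_ne_zero {d : Fin n → ℤ} (hd : IsPrimitiveZ d) : ∃ i, d i ≠ 0 := by
  by_contra hc; push_neg at hc
  have : Finset.univ.gcd d = 0 := Finset.gcd_eq_zero_iff.mpr (fun i _ => hc i)
  rw [IsPrimitiveZ] at hd; omega

lemma prim_ne_zero_fun {d : Fin n → ℤ} (hd : IsPrimitiveZ d) : (fun i => (d i : ℝ)) ≠ 0 := by
  obtain ⟨i, hi⟩ := prim_exists_ne_zero hd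
  intro hc
  have := congrFun hc i
  simp at this; exact hi this

lemma prim_neg {d : Fin n → ℤ} (hd : IsPrimitiveZ d) : IsPrimitiveZ (fun i => -(d i)) := by
  rw [IsPrimitiveZ] at *
  have h1 : Finset.univ.gcd d ∣ Finset.univ.gcd (fun i => -(d i)) :=
    Finset.dvd_gcd (fun i _ => (dvd_neg).mpr (Finset.gcd_dvd (Finset.mem_univ i)))
  have h2 : Finset.univ.gcd (fun i => -(d i)) ∣ Finset.univ.gcd d :=
    Finset.dvd_gcd (fun i _ => by
      have := Finset.gcd_dvd (s := Finset.univ) (f := fun i => -(d i)) (Finset.mem_univ i)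
      simpa [dvd_neg] using this)
  have := Int.dvd_antisymm (gcd_nonneg_int _) (gcd_nonneg_int d) h2 h1
  omega

lemma prim_of_intDot_neg_one {u d : Fin n → ℤ} (h : intDot u d = -1) : IsPrimitiveZ u := by
  have hdvd : Finset.univ.gcd u ∣ intDot u d :=
    Finset.dvd_sum (fun i _ => Dvd.dvd.mul_right (Finset.gcd_dvd (Finset.mem_univ i)) _)
  rw [h] at hdvd
  have h1 : Finset.univ.gcd u ∣ 1 := dvd_neg.mp hdvd
  have h2 := Int.isUnit_iff.mp (isUnit_of_dvd_one h1)
  have := gcd_nonneg_int u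
  rw [IsPrimitiveZ]
  omega

/-- Two primitive integer vectors that are positively proportional over `ℝ` are equal. -/
lemma prim_eq {d d' : Fin n → ℤ} (hd : IsPrimitiveZ d) (hd' : IsPrimitiveZ d')
    {α : ℝ} (hα : 0 < α) (h : ∀ i, (d i : ℝ) = α * (d' i : ℝ)) : d = d' := by
  -- cross products
  have cross : ∀ i j, d i * d' j = d j * d' i := by
    intro i j
    have : ((d i * d' j : ℤ) : ℝ) = ((d j * d' i : ℤ) : ℝ) := by
      push_cast
      rw [h i, h j]; ring
    exact_mod_cast this
  have key : ∀ (a b : Fin n → ℤ), IsPrimitiveZ b → (∀ i j, a i * b j = a j * b i) →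
      ∀ i, b i ∣ a i := by
    intro a b hb hcross i
    have hdvdall : ∀ j ∈ Finset.univ, b i ∣ a i * b j := by
      intro j _
      rw [hcross i j]
      exact dvd_mul_left _ _
    have h1 : b i ∣ Finset.univ.gcd (fun j => a i * b j) := Finset.dvd_gcd hdvdall
    rw [Finset.gcd_mul_left, hb, mul_one] at h1
    have h2 : normalize (a i) = |a i| := (Int.abs_eq_normalize _).symm
    rw [h2] at h1
    exact (dvd_abs _ _).mp h1
  have dvd1 : ∀ i, d' i ∣ d i := key d d' hd' cross
  have dvd2 : ∀ i, d i ∣ d' i := key d' d hd (fun i j => by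
    have := cross j i
    linarith [cross i j, cross j i])
  obtain ⟨i, hi⟩ := prim_exists_ne_zero hd'
  obtain ⟨c, hc⟩ := dvd1 i
  obtain ⟨c', hc'⟩ := dvd2 i
  -- d i = d' i * c, d' i = d i * c'  ⇒  c * c' = 1
  have hcc' : c * c' = 1 := by
    have : d' i = d' i * (c * c') := by rw [← mul_assoc, ← hc, ← hc']
    have h0 : d' i * 1 = d' i * (c * c') := by rw [mul_one]; exact this
    exact (mul_left_cancel₀ hi h0).symm
  have hc1 : c = 1 ∨ c = -1 := Int.eq_one_or_neg_one_of_mul_eq_one hcc'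
  have hαc : α = (c : ℝ) := by
    have h1 : (d i : ℝ) = α * d' i := h i
    have h2 : (d i : ℝ) = (c : ℝ) * d' i := by
      rw [hc]; push_cast; ring
    have hne : (d' i : ℝ) ≠ 0 := Int.cast_ne_zero.mpr hi
    have := h1.symm.trans h2
    field_simp at this
    linarith [this]
  have hc2 : c = 1 := by
    rcases hc1 with h1 | h1
    · exact h1
    · exfalso; rw [h1] at hαc; push_cast at hαc; linarith
  have hα1 : α = 1 := by rw [hαc, hc2]; norm_num
  funext j
  have := h j
  rw [hα1, one_mul] at this
  exact_mod_cast this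

end EdgeLen
namespace EdgeLen

variable {n : ℕ}

/-! ### segment lemmas -/

lemma seg_mem_iff {x y z : Fin n → ℝ} :
    z ∈ segment ℝ x y ↔ ∃ θ : ℝ, 0 ≤ θ ∧ θ ≤ 1 ∧ z = x + θ • (y - x) := by
  rw [segment_eq_image']
  constructor
  · rintro ⟨θ, ⟨h0, h1⟩, rfl⟩; exact ⟨θ, h0, h1, rfl⟩
  · rintro ⟨θ, h0, h1, rfl⟩; exact ⟨θ, ⟨h0, h1⟩, rfl⟩

lemma seg_cancel {x y b : Fin n → ℝ} (hxy : y ≠ x) (h : segment ℝ x y = segment ℝ x b) :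
    y = b := by
  have hy : y ∈ segment ℝ x b := h ▸ right_mem_segment ℝ x y
  have hb : b ∈ segment ℝ x y := h ▸ right_mem_segment ℝ x b
  obtain ⟨s, hs0, hs1, hys⟩ := seg_mem_iff.mp hy
  obtain ⟨t, ht0, ht1, hbt⟩ := seg_mem_iff.mp hb
  have hyx : y - x = s • (b - x) := by rw [hys]; abel
  have hbx : b - x = t • (y - x) := by rw [hbt]; abel
  have hcomp : y - x = (s * t) • (y - x) := by
    calc y - x = s • (b - x) := hyx
    _ = s • (t • (y - x)) := by rw [← hbx]
    _ = (s * t) • (y - x) := smul_smul s t _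
  have hne : y - x ≠ 0 := sub_ne_zero.mpr hxy
  have hst : s * t = 1 := by
    by_contra hc
    have : (1 - s * t) • (y - x) = 0 := by
      rw [sub_smul, one_smul, ← hcomp, sub_self]
    rcases smul_eq_zero.mp this with h1 | h1
    · exact hc (by linarith [sub_eq_zero.mp (by linarith [h1] : (1:ℝ) - s*t = 0)])
    · exact hne h1
  have hs : s = 1 := by nlinarith
  rw [hys, hs, one_smul]; abel

/-! ### faces of polytopes -/

/-- The set of maximizers of `dotR g` within a finite set. -/
noncomputable def amax (V : Finset (Fin n → ℝ)) (g : Fin n → ℝ) : Finset (Fin n → ℝ) :=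
  V.filter (fun y => ∀ z ∈ V, dotR g z ≤ dotR g y)

lemma mem_amax {V : Finset (Fin n → ℝ)} {g y} :
    y ∈ amax V g ↔ y ∈ V ∧ ∀ z ∈ V, dotR g z ≤ dotR g y := by
  rw [amax, Finset.mem_filter]

lemma amax_subset (V : Finset (Fin n → ℝ)) (g : Fin n → ℝ) : amax V g ⊆ V :=
  Finset.filter_subset _ _

lemma amax_nonempty {V : Finset (Fin n → ℝ)} (hV : V.Nonempty) (g : Fin n → ℝ) :
    (amax V g).Nonempty := by
  obtain ⟨y, hy, hmax⟩ := V.exists_max_image (dotR g) hV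
  exact ⟨y, mem_amax.mpr ⟨hy, hmax⟩⟩

lemma le_on_hull {V : Finset (Fin n → ℝ)} {g : Fin n → ℝ} {M : ℝ}
    (h : ∀ y ∈ V, dotR g y ≤ M) :
    ∀ z ∈ convexHull ℝ (V : Set (Fin n → ℝ)), dotR g z ≤ M := by
  intro z hz
  have : convexHull ℝ (V : Set (Fin n → ℝ)) ⊆ {p | dotR g p ≤ M} :=
    convexHull_min (fun y hy => h y hy) (convex_halfSpace_le (isLinearMap_dotR g) M)
  exact this hz

lemma amax_val {V : Finset (Fin n → ℝ)} {g : Fin n → ℝ} {y y' : Fin n → ℝ}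
    (hy : y ∈ amax V g) (hy' : y' ∈ amax V g) : dotR g y = dotR g y' := by
  obtain ⟨hyV, hyM⟩ := mem_amax.mp hy
  obtain ⟨hy'V, hy'M⟩ := mem_amax.mp hy'
  exact le_antisymm (hy'M y hyV) (hyM y' hy'V)

/-- Key description of exposed faces of a polytope. -/
lemma faceset_eq {V : Finset (Fin n → ℝ)} (hV : V.Nonempty) (g : Fin n → ℝ) :
    {z ∈ convexHull ℝ (V : Set (Fin n → ℝ)) |
      ∀ z' ∈ convexHull ℝ (V : Set (Fin n → ℝ)), dotR g z' ≤ dotR g z}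
      = convexHull ℝ ((amax V g : Finset (Fin n → ℝ)) : Set (Fin n → ℝ)) := by
  obtain ⟨w₀, hw₀⟩ := amax_nonempty hV g
  obtain ⟨hw₀V, hw₀M⟩ := mem_amax.mp hw₀
  set M := dotR g w₀ with hM
  have hub : ∀ z ∈ convexHull ℝ (V : Set (Fin n → ℝ)), dotR g z ≤ M := le_on_hull hw₀M
  apply Set.eq_of_subset_of_subset
  · rintro z ⟨hzP, hzmax⟩
    have hzM : dotR g z = M :=
      le_antisymm (hub z hzP) (hzmax w₀ (subset_convexHull ℝ _ hw₀V))
    rw [Finset.convexHull_eq] at hzP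
    obtain ⟨wt, hwt0, hwt1, hcm⟩ := hzP
    have hz' : z = ∑ y ∈ V, wt y • y := by
      rw [← hcm, Finset.centerMass_eq_of_sum_1 _ _ hwt1]; rfl
    have hdz : dotR g z = ∑ y ∈ V, wt y * dotR g y := by
      rw [hz']
      have := dotR_sum_smul g V wt (fun y => y)
      simpa using this
    have hzero : ∑ y ∈ V, wt y * (M - dotR g y) = 0 := by
      have : ∑ y ∈ V, wt y * (M - dotR g y)
          = (∑ y ∈ V, wt y) * M - ∑ y ∈ V, wt y * dotR g y := by
        rw [Finset.sum_mul, ← Finset.sum_sub_distrib]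
        congr 1; funext y; ring
      rw [this, hwt1, ← hdz, hzM]; ring
    have hterms := (Finset.sum_eq_zero_iff_of_nonneg (fun y hy =>
      mul_nonneg (hwt0 y hy) (by linarith [le_on_hull hw₀M y (subset_convexHull ℝ _ hy)]))).mp hzero
    have hsupp : ∀ y ∈ V, y ∉ amax V g → wt y = 0 := by
      intro y hyV hyn
      rcases mul_eq_zero.mp (hterms y hyV) with h | h
      · exact h
      · exfalso
        apply hyn
        refine mem_amax.mpr ⟨hyV, fun z' hz' => ?_⟩
        have : dotR g y = M := by linarith
        rw [this]
        exact le_on_hull hw₀M z' (subset_convexHull ℝ _ hz')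
    rw [Finset.convexHull_eq]
    refine ⟨wt, fun y hy => hwt0 y (amax_subset V g hy), ?_, ?_⟩
    · rw [Finset.sum_subset (amax_subset V g) hsupp]; exact hwt1
    · rw [Finset.centerMass_eq_of_sum_1]
      · rw [Finset.sum_subset (amax_subset V g) (fun y hy hyn => by rw [hsupp y hy hyn, zero_smul])]
        exact hz'.symm
      · rw [Finset.sum_subset (amax_subset V g) hsupp]; exact hwt1
  · intro z hz
    have hzV : z ∈ convexHull ℝ (V : Set (Fin n → ℝ)) :=
      convexHull_mono (by exact_mod_cast amax_subset V g) hz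
    have hzM : dotR g z = M := by
      have : convexHull ℝ ((amax V g : Finset _) : Set (Fin n → ℝ)) ⊆ {p | dotR g p = M} := by
        apply convexHull_min
        · intro y hy
          exact amax_val hy hw₀
        · exact convex_hyperplane (isLinearMap_dotR g) M
      exact this hz
    exact ⟨hzV, fun z' hz' => by rw [hzM]; exact hub z' hz'⟩

/-- Perturbation: the `g'`-face of the `g`-face is a face. -/
lemma amax_step {V : Finset (Fin n → ℝ)} (hV : V.Nonempty) (g g' : Fin n → ℝ) :
    ∃ ε : ℝ, 0 < ε ∧ amax V (g + ε • g') = amax (amax V g) g' := by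
  obtain ⟨w₀, hw₀⟩ := amax_nonempty hV g
  obtain ⟨hw₀V, hw₀M⟩ := mem_amax.mp hw₀
  set M := dotR g w₀ with hM
  have hWval : ∀ y ∈ amax V g, dotR g y = M := fun y hy => amax_val hy hw₀
  obtain ⟨z₀, hz₀⟩ := amax_nonempty (⟨w₀, hw₀⟩ : (amax V g).Nonempty) g'
  obtain ⟨hz₀W, hz₀M⟩ := mem_amax.mp hz₀
  obtain ⟨K, hKV, hK⟩ := V.exists_max_image (fun y => |dotR g' y|) hV
  have hKnn : 0 ≤ |dotR g' K| := abs_nonneg _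
  set κ := |dotR g' K| with hκ
  rcases (V \ amax V g).eq_empty_or_nonempty with hemp | hne
  · -- g is constant on V
    refine ⟨1, one_pos, ?_⟩
    have hVW : amax V g = V := by
      apply Finset.Subset.antisymm (amax_subset V g)
      intro y hy
      by_contra hc
      exact (Finset.notMem_empty y) (hemp ▸ Finset.mem_sdiff.mpr ⟨hy, hc⟩)
    rw [hVW]
    have hconst : ∀ y ∈ V, dotR g y = M := by rw [← hVW]; exact hWval
    apply Finset.ext
    intro y
    rw [mem_amax, mem_amax]
    constructor
    · rintro ⟨hyV, hmax⟩
      refine ⟨hyV, fun z hz => ?_⟩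
      have h1 := hmax z hz
      rw [dotR_left_add, dotR_left_add, hconst y hyV, hconst z hz] at h1
      linarith
    · rintro ⟨hyV, hmax⟩
      refine ⟨hyV, fun z hz => ?_⟩
      rw [dotR_left_add, dotR_left_add, hconst y hyV, hconst z hz]
      have := hmax z hz
      linarith
  · obtain ⟨ym, hym, hymmin⟩ := (V \ amax V g).exists_min_image (fun y => M - dotR g y) hne
    obtain ⟨hymV, hymn⟩ := Finset.mem_sdiff.mp hym
    set δ := M - dotR g ym with hδ
    have hδpos : 0 < δ := by
      rw [hδ]
      have hyle : dotR g ym ≤ M := le_on_hull hw₀M ym (subset_convexHull ℝ _ hymV)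
      rcases lt_or_eq_of_le hyle with h | h
      · linarith
      · exfalso
        apply hymn
        refine mem_amax.mpr ⟨hymV, fun z hz => ?_⟩
        rw [h]
        exact le_on_hull hw₀M z (subset_convexHull ℝ _ hz)
    have hgap : ∀ y ∈ V, y ∉ amax V g → dotR g y ≤ M - δ := by
      intro y hyV hyn
      have := hymmin y (Finset.mem_sdiff.mpr ⟨hyV, hyn⟩)
      linarith
    set ε := δ / (2 * κ + 1) with hε
    have hεpos : 0 < ε := div_pos hδpos (by linarith)
    have hεκ : ε * (2 * κ) < δ := by
      have h1 : ε * (2 * κ + 1) = δ := by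
        rw [hε]; field_simp
      nlinarith
    have hbnd : ∀ y ∈ V, |dotR g' y| ≤ κ := hK
    refine ⟨ε, hεpos, ?_⟩
    apply Finset.ext
    intro y
    rw [mem_amax, mem_amax]
    constructor
    · rintro ⟨hyV, hmax⟩
      have hyW : y ∈ amax V g := by
        by_contra hc
        have h1 := hmax z₀ (amax_subset V g hz₀W)
        rw [dotR_left_add, dotR_left_add] at h1
        have h2 : dotR g z₀ = M := hWval z₀ hz₀W
        have h3 : dotR g y ≤ M - δ := hgap y hyV hc
        have h4 : dotR g' y ≤ κ := (abs_le.mp (hbnd y hyV)).2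
        have h5 : -κ ≤ dotR g' z₀ := (abs_le.mp (hbnd z₀ (amax_subset V g hz₀W))).1
        nlinarith
      refine ⟨hyW, fun z hz => ?_⟩
      have h1 := hmax z (amax_subset V g hz)
      rw [dotR_left_add, dotR_left_add, hWval y hyW, hWval z hz] at h1
      nlinarith
    · rintro ⟨hyW, hmax⟩
      obtain ⟨hyV, _⟩ := mem_amax.mp hyW
      refine ⟨hyV, fun z hz => ?_⟩
      rw [dotR_left_add, dotR_left_add]
      by_cases hzW : z ∈ amax V g
      · rw [hWval y hyW, hWval z hzW]
        have := hmax z hzW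
        nlinarith
      · have h3 : dotR g z ≤ M - δ := hgap z hz hzW
        have h4 : dotR g' z ≤ κ := (abs_le.mp (hbnd z hz)).2
        have h5 : -κ ≤ dotR g' y := (abs_le.mp (hbnd y hyV)).1
        have h6 : dotR g y = M := hWval y hyW
        nlinarith

end EdgeLen
namespace EdgeLen

variable {n : ℕ}

/-- A face of a face of a polytope is a face of the polytope. -/
lemma isFaceOf_trans {V : Finset (Fin n → ℝ)} (hV : V.Nonempty)
    {F G : Set (Fin n → ℝ)}
    (h1 : IsFaceOf (convexHull ℝ (V : Set (Fin n → ℝ))) F) (h2 : IsFaceOf F G) :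
    IsFaceOf (convexHull ℝ (V : Set (Fin n → ℝ))) G := by
  obtain ⟨g, hF⟩ := h1
  obtain ⟨g', hG⟩ := h2
  obtain ⟨ε, hε, hstep⟩ := amax_step hV g g'
  have hFW : F = convexHull ℝ ((amax V g : Finset _) : Set (Fin n → ℝ)) := by
    rw [hF]; exact faceset_eq hV g
  have hWne : (amax V g).Nonempty := amax_nonempty hV g
  refine ⟨g + ε • g', ?_⟩
  rw [faceset_eq hV (g + ε • g'), hstep, ← faceset_eq hWne g', ← hFW, ← hG]

lemma vertex_strict {P : Set (Fin n → ℝ)} {x : Fin n → ℝ} (hx : IsVertexOf P x) :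
    x ∈ P ∧ ∃ f : Fin n → ℝ, (∀ y ∈ P, dotR f y ≤ dotR f x) ∧
      (∀ y ∈ P, y ≠ x → dotR f y < dotR f x) := by
  obtain ⟨f, hf⟩ := hx
  have hxmem : x ∈ ({x} : Set (Fin n → ℝ)) := rfl
  rw [hf] at hxmem
  obtain ⟨hxP, hxmax⟩ := hxmem
  refine ⟨hxP, f, hxmax, fun y hy hyne => ?_⟩
  rcases lt_or_eq_of_le (hxmax y hy) with h | h
  · exact h
  · exfalso
    apply hyne
    have : y ∈ ({x} : Set (Fin n → ℝ)) := by
      rw [hf]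
      exact ⟨hy, fun z hz => h ▸ hxmax z hz⟩
    exact this

lemma vertex_mem_V {V : Finset (Fin n → ℝ)} {x : Fin n → ℝ}
    (hx : IsVertexOf (convexHull ℝ (V : Set (Fin n → ℝ))) x) : x ∈ V := by
  obtain ⟨f, hf⟩ := hx
  have hV : V.Nonempty := by
    rcases V.eq_empty_or_nonempty with h | h
    · exfalso
      have hxm : x ∈ ({x} : Set (Fin n → ℝ)) := rfl
      rw [hf] at hxm
      rw [h] at hxm
      simp at hxm
    · exact h
  have h1 : ({x} : Set (Fin n → ℝ)) = convexHull ℝ ((amax V f : Finset _) : Set (Fin n → ℝ)) :=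
    hf.trans (faceset_eq hV f)
  obtain ⟨w, hw⟩ := amax_nonempty hV f
  have : w ∈ ({x} : Set (Fin n → ℝ)) := by
    rw [h1]
    exact subset_convexHull ℝ _ hw
  rw [Set.mem_singleton_iff] at this
  rw [← this]
  exact (mem_amax.mp hw).1

/-- Every vertex of a polytope, being exposed within a face as the far endpoint of a
segment, is a vertex: the second endpoint of an edge at `x` is a vertex. -/
lemma endpoint_vertex {V : Finset (Fin n → ℝ)} (hV : V.Nonempty)
    {x y : Fin n → ℝ} (hxy : x ≠ y)
    (hE : IsFaceOf (convexHull ℝ (V : Set (Fin n → ℝ))) (segment ℝ x y)) :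
    IsVertexOf (convexHull ℝ (V : Set (Fin n → ℝ))) y := by
  apply isFaceOf_trans hV hE
  refine ⟨y - x, ?_⟩
  have hQ : 0 < dotR (y - x) (y - x) := dotR_self_pos (sub_ne_zero.mpr hxy.symm)
  apply Set.eq_of_subset_of_subset
  · intro z hz
    rw [Set.mem_singleton_iff] at hz
    rw [hz]
    refine ⟨right_mem_segment ℝ x y, fun z' hz' => ?_⟩
    obtain ⟨θ, h0, h1, rfl⟩ := seg_mem_iff.mp hz'
    have hcalc := dotR_add_smul_sub (y - x) x y θ
    rw [hcalc]
    have hy : dotR (y - x) y - dotR (y - x) x = dotR (y - x) (y - x) := (dotR_sub_right _ y x).symm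
    nlinarith
  · rintro z ⟨hzE, hzmax⟩
    obtain ⟨θ, h0, h1, rfl⟩ := seg_mem_iff.mp hzE
    have hymax := hzmax y (right_mem_segment ℝ x y)
    rw [dotR_add_smul_sub] at hymax
    have hy : dotR (y - x) y - dotR (y - x) x = dotR (y - x) (y - x) := (dotR_sub_right _ y x).symm
    rw [hy] at hymax
    have hθ : θ = 1 := by
      have hyy : dotR (y - x) y = dotR (y - x) x + dotR (y - x) (y - x) := by
        rw [← hy]; ring
      nlinarith
    rw [Set.mem_singleton_iff, hθ, one_smul]
    abel

/-- Existence of an edge at a vertex of a polytope which is not a point. -/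
lemma exists_edge_at_vertex :
    ∀ (N : ℕ) (V : Finset (Fin n → ℝ)), V.card ≤ N →
    ∀ (f x : Fin n → ℝ), x ∈ V →
    (∀ y ∈ V, y ≠ x → dotR f y < dotR f x) →
    (∃ y ∈ V, y ≠ x) →
    ∃ (g y : Fin n → ℝ), y ≠ x ∧
      {z ∈ convexHull ℝ (V : Set (Fin n → ℝ)) |
        ∀ z' ∈ convexHull ℝ (V : Set (Fin n → ℝ)), dotR g z' ≤ dotR g z} = segment ℝ x y := by
  intro N
  induction N with
  | zero =>
    intro V hcard f x hxV _ _
    exfalso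
    have : V.Nonempty := ⟨x, hxV⟩
    have := Finset.card_pos.mpr this
    omega
  | succ N ih =>
    intro V hcard f x hxV hstrict hne
    set V' := V.erase x with hV'
    have hV'ne : V'.Nonempty := by
      obtain ⟨y, hyV, hyne⟩ := hne
      exact ⟨y, Finset.mem_erase.mpr ⟨hyne, hyV⟩⟩
    -- D y > 0 for y ∈ V'
    have hD : ∀ y ∈ V', 0 < dotR f x - dotR f y := by
      intro y hy
      obtain ⟨hyne, hyV⟩ := Finset.mem_erase.mp hy
      linarith [hstrict y hyV hyne]
    set nrm : (Fin n → ℝ) → (Fin n → ℝ) := fun y => (dotR f x - dotR f y)⁻¹ • (y - x) with hnrm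
    by_cases hcol : ∀ y₁ ∈ V', ∀ y₂ ∈ V', nrm y₁ = nrm y₂
    · -- collinear case: the polytope is a segment
      obtain ⟨ys, hys, hysmax⟩ := V'.exists_max_image (fun y => dotR f x - dotR f y) hV'ne
      refine ⟨0, ys, (Finset.mem_erase.mp hys).1, ?_⟩
      have hseg : convexHull ℝ (V : Set (Fin n → ℝ)) = segment ℝ x ys := by
        apply Set.eq_of_subset_of_subset
        · apply convexHull_min
          · intro y hyV
            by_cases hyx : y = x
            · rw [hyx]; exact left_mem_segment ℝ x ys
            · have hyV' : y ∈ V' := Finset.mem_erase.mpr ⟨hyx, hyV⟩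
              have heq := hcol y hyV' ys hys
              rw [hnrm] at heq
              simp only at heq
              set Dy := dotR f x - dotR f y with hDy
              set Ds := dotR f x - dotR f ys with hDs
              have hDyp := hD y hyV'
              have hDsp := hD ys hys
              have hyx2 : y - x = (Dy / Ds) • (ys - x) := by
                have h2 : y - x = Dy • (Dy⁻¹ • (y - x)) := by
                  rw [smul_smul, mul_inv_cancel₀ (ne_of_gt hDyp), one_smul]
                rw [h2, heq, smul_smul]
                congr 1
              rw [seg_mem_iff]
              refine ⟨Dy / Ds, le_of_lt (div_pos hDyp hDsp), ?_, ?_⟩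
              · rw [div_le_one hDsp]; exact hysmax y hyV'
              · rw [← hyx2]; abel
          · exact convex_segment x ys
        · exact (convex_convexHull ℝ _).segment_subset
            (subset_convexHull ℝ _ hxV)
            (subset_convexHull ℝ _ (Finset.mem_erase.mp hys).2)
      rw [hseg]
      apply Set.eq_of_subset_of_subset
      · rintro z ⟨hz, _⟩; exact hz
      · intro z hz; exact ⟨hz, fun z' _ => by rw [dotR_zero_left, dotR_zero_left]⟩
    · -- non-collinear: cut down to a proper face
      push_neg at hcol
      obtain ⟨y₁, hy₁, y₂, hy₂, hnne⟩ := hcol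
      set h : Fin n → ℝ := nrm y₁ - nrm y₂ with hh
      set r : (Fin n → ℝ) → ℝ := fun y => dotR h (nrm y) with hr
      have hr12 : r y₂ < r y₁ := by
        have h1 : r y₁ - r y₂ = dotR h (nrm y₁ - nrm y₂) := (dotR_sub_right h _ _).symm
        have hpos : 0 < dotR h h := dotR_self_pos (sub_ne_zero.mpr hnne)
        rw [← hh] at h1
        linarith
      obtain ⟨y₀, hy₀, hy₀max⟩ := V'.exists_max_image (fun y => -(r y)) hV'ne
      set μ := -(r y₀) with hμ
      set gg : Fin n → ℝ := -h + μ • f with hgg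
      have hVne : V.Nonempty := ⟨x, hxV⟩
      have hkey : ∀ y ∈ V', dotR gg y - dotR gg x
          = (dotR f x - dotR f y) * (-(r y) - μ) := by
        intro y hy
        have hDyp := hD y hy
        have h1 : dotR gg y - dotR gg x = dotR gg (y - x) := (dotR_sub_right gg y x).symm
        have h2 : dotR gg (y - x) = -dotR h (y - x) + μ * dotR f (y - x) :=
          dotR_left_neg_add h f _ μ
        have h3 : (dotR f x - dotR f y) * r y = dotR h (y - x) := by
          have : r y = (dotR f x - dotR f y)⁻¹ * dotR h (y - x) := by
            rw [hr]; simp only; rw [hnrm]; simp only [dotR_smul_right]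
          rw [this]
          field_simp
        have h4 : dotR f (y - x) = dotR f y - dotR f x := dotR_sub_right f y x
        rw [h1, h2, ← h3, h4]
        ring
      have hbound : ∀ y ∈ V, dotR gg y ≤ dotR gg x := by
        intro y hy
        by_cases hyx : y = x
        · rw [hyx]
        · have hyV' : y ∈ V' := Finset.mem_erase.mpr ⟨hyx, hy⟩
          have := hkey y hyV'
          have hDyp := hD y hyV'
          have hrle : -(r y) ≤ μ := hy₀max y hyV'
          nlinarith
      have hxW : x ∈ amax V gg := mem_amax.mpr ⟨hxV, hbound⟩
      have hy₀V : y₀ ∈ V := (Finset.mem_erase.mp hy₀).2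
      have hy₀x : y₀ ≠ x := (Finset.mem_erase.mp hy₀).1
      have hy₀W : y₀ ∈ amax V gg := by
        refine mem_amax.mpr ⟨hy₀V, fun z hz => ?_⟩
        have heq : dotR gg y₀ = dotR gg x := by
          have := hkey y₀ hy₀
          rw [← hμ] at this
          simp at this
          linarith
        rw [heq]
        exact hbound z hz
      have hy₁V : y₁ ∈ V := (Finset.mem_erase.mp hy₁).2
      have hy₁notW : y₁ ∉ amax V gg := by
        intro hc
        have h1 : dotR gg y₁ = dotR gg x :=
          le_antisymm (hbound y₁ hy₁V) ((mem_amax.mp hc).2 x hxV)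
        have h2 := hkey y₁ hy₁
        have hDyp := hD y₁ hy₁
        have h3 : -(r y₁) = μ := by
          have h4 : (dotR f x - dotR f y₁) * (-(r y₁) - μ) = 0 := by linarith
          rcases mul_eq_zero.mp h4 with h5 | h5
          · linarith
          · linarith
        have h5 : -(r y₁) < -(r y₂) := by linarith
        have h6 : -(r y₂) ≤ μ := hy₀max y₂ hy₂
        linarith
      have hWss : amax V gg ⊂ V :=
        Finset.ssubset_iff_of_subset (amax_subset V gg) |>.mpr ⟨y₁, hy₁V, hy₁notW⟩
      have hWcard : (amax V gg).card ≤ N := by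
        have := Finset.card_lt_card hWss
        omega
      obtain ⟨g', yy, hyyne, hfaceW⟩ := ih (amax V gg) hWcard f x hxW
        (fun y hy hyne => hstrict y (amax_subset V gg hy) hyne)
        ⟨y₀, hy₀W, hy₀x⟩
      obtain ⟨ε, hεp, hstep⟩ := amax_step hVne gg g'
      have hWne : (amax V gg).Nonempty := ⟨x, hxW⟩
      refine ⟨gg + ε • g', yy, hyyne, ?_⟩
      rw [faceset_eq hVne (gg + ε • g'), hstep, ← faceset_eq hWne g']
      exact hfaceW

end EdgeLen
namespace EdgeLen

variable {n : ℕ}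

/-- Tangent-cone lemma: if `h` is a functional nonnegative on the directions of all
edges at the vertex `x`, then `h` is minimized over the polytope at `x`. -/
lemma tangent_cone {V : Finset (Fin n → ℝ)} {x : Fin n → ℝ}
    (hx : IsVertexOf (convexHull ℝ (V : Set (Fin n → ℝ))) x)
    (b : Fin n → Fin n → ℝ) (d : Fin n → Fin n → ℤ) (L : Fin n → ℕ)
    (hbd : ∀ k i, b k i - x i = (L k : ℝ) * (d k i : ℝ))
    (hL : ∀ k, 1 ≤ L k)
    (hedge : ∀ E', IsEdgeOf (convexHull ℝ (V : Set (Fin n → ℝ))) E' → x ∈ E' →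
      ∃ k, E' = segment ℝ x (b k))
    (h : Fin n → ℝ) (hh : ∀ j, 0 ≤ dotR h (fun i => (d j i : ℝ))) :
    ∀ y ∈ convexHull ℝ (V : Set (Fin n → ℝ)), dotR h x ≤ dotR h y := by
  obtain ⟨hxP, f, hfmax, hfstrict⟩ := vertex_strict hx
  have hxV : x ∈ V := vertex_mem_V hx
  have hVne : V.Nonempty := ⟨x, hxV⟩
  suffices hsuf : ∀ y ∈ V, dotR h x ≤ dotR h y by
    intro y hy
    exact convexHull_min hsuf (convex_halfSpace_ge (isLinearMap_dotR h) _) hy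
  by_contra hc
  push_neg at hc
  obtain ⟨ys, hysV, hlt⟩ := hc
  set V' := V.erase x with hV'
  have hysne : ys ≠ x := fun hc => by rw [hc] at hlt; linarith
  have hysV' : ys ∈ V' := Finset.mem_erase.mpr ⟨hysne, hysV⟩
  have hV'ne : V'.Nonempty := ⟨ys, hysV'⟩
  have hD : ∀ y ∈ V', 0 < dotR f x - dotR f y := by
    intro y hy
    obtain ⟨hyne, hyV⟩ := Finset.mem_erase.mp hy
    linarith [hfstrict y (subset_convexHull ℝ _ hyV) hyne]
  set val : (Fin n → ℝ) → ℝ :=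
    fun y => (dotR h x - dotR h y) / (dotR f x - dotR f y) with hval
  obtain ⟨y₀, hy₀, hy₀max⟩ := V'.exists_max_image val hV'ne
  set μ := val y₀ with hμ
  have hμpos : 0 < μ := by
    have h1 : 0 < val ys := div_pos (by linarith) (hD ys hysV')
    linarith [hy₀max ys hysV']
  set gg : Fin n → ℝ := -h + μ • f with hgg
  have hkey : ∀ y ∈ V', dotR gg y - dotR gg x
      = (dotR f x - dotR f y) * (val y - μ) := by
    intro y hy
    have hDyp := hD y hy
    have h1 : dotR gg y - dotR gg x = dotR gg (y - x) := (dotR_sub_right gg y x).symm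
    have h2 : dotR gg (y - x) = -dotR h (y - x) + μ * dotR f (y - x) :=
      dotR_left_neg_add h f _ μ
    have h3 : (dotR f x - dotR f y) * val y = dotR h x - dotR h y := by
      rw [hval]; field_simp
    have h4 : dotR f (y - x) = dotR f y - dotR f x := dotR_sub_right f y x
    have h5 : dotR h (y - x) = dotR h y - dotR h x := dotR_sub_right h y x
    rw [h1, h2, h4, h5]
    nlinarith [h3]
  have hbound : ∀ y ∈ V, dotR gg y ≤ dotR gg x := by
    intro y hy
    by_cases hyx : y = x
    · rw [hyx]
    · have hyV' : y ∈ V' := Finset.mem_erase.mpr ⟨hyx, hy⟩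
      have := hkey y hyV'
      have hDyp := hD y hyV'
      have hrle : val y ≤ μ := hy₀max y hyV'
      nlinarith
  have hxW : x ∈ amax V gg := mem_amax.mpr ⟨hxV, hbound⟩
  have hy₀V : y₀ ∈ V := (Finset.mem_erase.mp hy₀).2
  have hy₀x : y₀ ≠ x := (Finset.mem_erase.mp hy₀).1
  have hy₀W : y₀ ∈ amax V gg := by
    refine mem_amax.mpr ⟨hy₀V, fun z hz => ?_⟩
    have heq : dotR gg y₀ = dotR gg x := by
      have := hkey y₀ hy₀
      rw [← hμ] at this
      simp at this
      linarith
    rw [heq]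
    exact hbound z hz
  have hWne : (amax V gg).Nonempty := ⟨x, hxW⟩
  obtain ⟨g', yy, hyyne, hfaceW⟩ := exists_edge_at_vertex (amax V gg).card (amax V gg)
    le_rfl f x hxW
    (fun y hy hyne => hfstrict y (subset_convexHull ℝ _ (amax_subset V gg hy)) hyne)
    ⟨y₀, hy₀W, hy₀x⟩
  obtain ⟨ε, hεp, hstep⟩ := amax_step hVne gg g'
  have hface : IsFaceOf (convexHull ℝ (V : Set (Fin n → ℝ))) (segment ℝ x yy) := by
    refine ⟨gg + ε • g', ?_⟩
    rw [faceset_eq hVne (gg + ε • g'), hstep, ← faceset_eq hWne g']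
    exact hfaceW.symm
  have hedgeE : IsEdgeOf (convexHull ℝ (V : Set (Fin n → ℝ))) (segment ℝ x yy) :=
    ⟨hface, x, yy, fun hc => hyyne hc.symm, rfl⟩
  obtain ⟨k, hk⟩ := hedge _ hedgeE (left_mem_segment ℝ x yy)
  have hyyb : yy = b k := seg_cancel hyyne hk
  have hyyW : yy ∈ convexHull ℝ ((amax V gg : Finset _) : Set (Fin n → ℝ)) := by
    have : yy ∈ {z ∈ convexHull ℝ ((amax V gg : Finset _) : Set (Fin n → ℝ)) |
        ∀ z' ∈ convexHull ℝ ((amax V gg : Finset _) : Set (Fin n → ℝ)),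
          dotR g' z' ≤ dotR g' z} := by
      rw [hfaceW]
      exact right_mem_segment ℝ x yy
    exact this.1
  have hyyP : yy ∈ convexHull ℝ (V : Set (Fin n → ℝ)) :=
    convexHull_mono (by exact_mod_cast amax_subset V gg) hyyW
  have heqgg : dotR gg yy = dotR gg x := by
    have hsub : convexHull ℝ ((amax V gg : Finset _) : Set (Fin n → ℝ))
        ⊆ {p | dotR gg p = dotR gg x} := by
      apply convexHull_min
      · intro w hw
        exact le_antisymm (hbound w (amax_subset V gg hw)) ((mem_amax.mp hw).2 x hxV)
      · exact convex_hyperplane (isLinearMap_dotR gg) _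
    exact hsub hyyW
  -- now derive the contradiction
  have hyx : (yy - x) = (L k : ℝ) • (fun i => (d k i : ℝ)) := by
    funext i
    have := hbd k i
    rw [← hyyb] at this
    simpa [Pi.sub_apply, Pi.smul_apply, smul_eq_mul] using this
  have hfd : dotR f (fun i => (d k i : ℝ)) < 0 := by
    have h1 : dotR f yy < dotR f x := hfstrict yy hyyP hyyne
    have h2 : dotR f (yy - x) = dotR f yy - dotR f x := dotR_sub_right f yy x
    rw [hyx, dotR_smul_right] at h2
    have hLpos : (0:ℝ) < (L k : ℝ) := by exact_mod_cast hL k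
    nlinarith
  have hggd : dotR gg (fun i => (d k i : ℝ)) < 0 := by
    have := dotR_left_neg_add h f (fun i => (d k i : ℝ)) μ
    rw [← hgg] at this
    rw [this]
    have := hh k
    nlinarith
  have hzero : dotR gg (yy - x) = 0 := by
    rw [dotR_sub_right]; linarith
  rw [hyx, dotR_smul_right] at hzero
  have hLpos : (0:ℝ) < (L k : ℝ) := by exact_mod_cast hL k
  nlinarith

end EdgeLen
namespace EdgeLen

variable {n : ℕ}

lemma lattice_diff {x y : Fin n → ℝ} (hx : IsLatticePt x) (hy : IsLatticePt y) :
    ∃ z : Fin n → ℤ, ∀ i, y i - x i = (z i : ℝ) := by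
  choose a ha using hx
  choose b hb using hy
  exact ⟨fun i => b i - a i, fun i => by rw [ha i, hb i]; push_cast; ring⟩

lemma gcd_split {z : Fin n → ℤ} (hz : ∃ i, z i ≠ 0) :
    ∃ (L : ℕ) (d : Fin n → ℤ), 1 ≤ L ∧ IsPrimitiveZ d ∧ ∀ i, z i = (L : ℤ) * d i := by
  set g := Finset.univ.gcd z with hg
  have hgne : g ≠ 0 := by
    intro hc
    obtain ⟨i, hi⟩ := hz
    exact hi (Finset.gcd_eq_zero_iff.mp hc i (Finset.mem_univ i))
  have hgpos : 0 < g := lt_of_le_of_ne (gcd_nonneg_int z) (Ne.symm hgne)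
  have hdvd : ∀ i, g ∣ z i := fun i => Finset.gcd_dvd (Finset.mem_univ i)
  refine ⟨g.toNat, fun i => z i / g, ?_, ?_, ?_⟩
  · omega
  · rw [IsPrimitiveZ]
    have h1 : Finset.univ.gcd (fun i => g * (z i / g)) = normalize g * Finset.univ.gcd (fun i => z i / g) :=
      Finset.gcd_mul_left
    have h2 : (fun i => g * (z i / g)) = z := by
      funext i
      exact Int.mul_ediv_cancel' (hdvd i)
    rw [h2] at h1
    have h3 : normalize g = g := by
      rw [← Int.abs_eq_normalize, abs_of_pos hgpos]
    rw [h3] at h1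
    have h4 : g * 1 = g * Finset.univ.gcd (fun i => z i / g) := by
      rw [mul_one, ← h1]
    exact (mul_left_cancel₀ hgne h4).symm
  · intro i
    rw [Int.toNat_of_nonneg (le_of_lt hgpos)]
    exact (Int.mul_ediv_cancel' (hdvd i)).symm

lemma edge_endpoints {P E : Set (Fin n → ℝ)} {x : Fin n → ℝ} (hE : IsEdgeOf P E)
    (hx : IsVertexOf P x) (hxE : x ∈ E) : ∃ y, y ≠ x ∧ E = segment ℝ x y := by
  obtain ⟨hface, a, bb, hab, hEs⟩ := hE
  obtain ⟨hxP, f, hfmax, hfstrict⟩ := vertex_strict hx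
  obtain ⟨uu, hu⟩ := hface
  have hEP : E ⊆ P := by rw [hu]; exact fun z hz => hz.1
  subst hEs
  obtain ⟨θ, h0, h1, hxθ⟩ := seg_mem_iff.mp hxE
  by_cases hax : a = x
  · exact ⟨bb, fun hc => hab (hax.trans hc.symm), by rw [hax]⟩
  by_cases hbx : bb = x
  · refine ⟨a, fun hc => hab (hc.trans hbx.symm), ?_⟩
    rw [hbx, segment_symm]
  exfalso
  have haP : a ∈ P := hEP (left_mem_segment ℝ a bb)
  have hbP : bb ∈ P := hEP (right_mem_segment ℝ a bb)
  have hfa : dotR f a < dotR f x := hfstrict a haP hax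
  have hfb : dotR f bb < dotR f x := hfstrict bb hbP hbx
  have hcalc : dotR f x = dotR f a + θ * (dotR f bb - dotR f a) := by
    rw [hxθ]; exact dotR_add_smul_sub f a bb θ
  rcases eq_or_lt_of_le h0 with hθ0 | hθ0
  · rw [← hθ0] at hcalc
    simp at hcalc
    linarith
  · nlinarith [mul_pos hθ0 (sub_pos.mpr hfb), mul_nonneg (sub_nonneg.mpr h1) (sub_pos.mpr hfa).le]

/-- The maximizer set of a nonzero integer functional with `n-1` independent
directions through a point is a facet (dimension count). -/
lemma facet_dim {F : Set (Fin n → ℝ)} {u : Fin n → ℤ} {x : Fin n → ℝ} (hxF : x ∈ F)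
    (c : Fin n → (Fin n → ℝ)) (hc : LinearIndependent ℝ c) (k : Fin n)
    (hmem : ∀ j, j ≠ k → ∃ p ∈ F, ∃ t : ℝ, 0 < t ∧ ∀ i, p i - x i = t * c j i)
    (hval : ∀ y ∈ F, ∀ y' ∈ F, dotZ u y = dotZ u y')
    (hne : dotR (fun i => (u i : ℝ)) (c k) ≠ 0) :
    dimSet F + 1 = n := by
  have hn : 0 < n := k.pos
  set φ : (Fin n → ℝ) →ₗ[ℝ] ℝ := (isLinearMap_dotR (fun i => (u i : ℝ))).mk' _ with hφ
  have hφa : ∀ z, φ z = dotR (fun i => (u i : ℝ)) z := fun z => rfl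
  -- upper bound
  have hupper : vectorSpan ℝ F ≤ LinearMap.ker φ := by
    rw [vectorSpan_def]
    rw [Submodule.span_le]
    rintro z hz
    obtain ⟨y, hy, y', hy', rfl⟩ := Set.mem_vsub.mp hz
    have : dotZ u y = dotZ u y' := hval y hy y' hy'
    rw [dotZ_cast, dotZ_cast] at this
    simp only [SetLike.mem_coe, LinearMap.mem_ker, hφa]
    rw [vsub_eq_sub, dotR_sub_right]
    linarith
  have hker : Module.finrank ℝ (LinearMap.ker φ) = n - 1 := by
    have hrange : LinearMap.range φ = ⊤ := by
      rw [LinearMap.range_eq_top]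
      intro r
      refine ⟨(r / dotR (fun i => (u i : ℝ)) (c k)) • c k, ?_⟩
      rw [hφa, dotR_smul_right]
      field_simp
    have := LinearMap.finrank_range_add_finrank_ker φ
    rw [hrange, finrank_top] at this
    have hfr : Module.finrank ℝ (Fin n → ℝ) = n := by
      simp [Module.finrank_pi]
    have hfrR : Module.finrank ℝ ℝ = 1 := Module.finrank_self ℝ
    omega
  have hup : Module.finrank ℝ (vectorSpan ℝ F) ≤ n - 1 := by
    rw [← hker]
    exact Submodule.finrank_mono hupper
  -- lower bound
  have hcsub : LinearIndependent ℝ (fun j : {j : Fin n // j ≠ k} => c j.1) :=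
    hc.comp _ Subtype.val_injective
  have hcard : Fintype.card {j : Fin n // j ≠ k} = n - 1 := by
    have h1 : Fintype.card {j : Fin n // j = k} = 1 := Fintype.card_subtype_eq k
    have h2 := Fintype.card_subtype_compl (fun j : Fin n => j = k)
    rw [h1] at h2
    simpa using h2
  have hlowspan : Submodule.span ℝ (Set.range (fun j : {j : Fin n // j ≠ k} => c j.1))
      ≤ vectorSpan ℝ F := by
    rw [Submodule.span_le]
    rintro z hz
    obtain ⟨j, hj⟩ := hz
    obtain ⟨p, hpF, t, ht, hpt⟩ := hmem j.1 j.2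
    have hp : c j.1 = t⁻¹ • (p -ᵥ x) := by
      funext i
      simp only [Pi.smul_apply, vsub_eq_sub, Pi.sub_apply, smul_eq_mul]
      rw [hpt i]
      field_simp
    have hzc : z = c j.1 := by rw [← hj]
    rw [hzc, hp]
    exact Submodule.smul_mem _ _ (vsub_mem_vectorSpan ℝ hpF hxF)
  have hlow : n - 1 ≤ Module.finrank ℝ (vectorSpan ℝ F) := by
    have h1 := finrank_span_eq_card hcsub
    rw [hcard] at h1
    rw [← h1]
    exact Submodule.finrank_mono hlowspan
  rw [dimSet]
  omega

/-- Rows of a real-cast unimodular integer matrix are linearly independent. -/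
lemma rows_linearIndependent {d : Fin n → Fin n → ℤ} {B : Matrix (Fin n) (Fin n) ℤ}
    (hCB : (Matrix.of d) * B = 1) :
    LinearIndependent ℝ (fun k => (fun i => (d k i : ℝ))) := by
  rw [Fintype.linearIndependent_iff]
  intro g hg j
  have hsum : ∀ i, ∑ k, g k * (d k i : ℝ) = 0 := by
    intro i
    have := congrFun hg i
    simpa [Finset.sum_apply, Pi.smul_apply, smul_eq_mul] using this
  have hBC : ∀ l m : Fin n, ∑ i, (d l i : ℝ) * (B i m : ℝ) = if l = m then 1 else 0 := by
    intro l m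
    have h0 : ((Matrix.of d) * B) l m = (1 : Matrix (Fin n) (Fin n) ℤ) l m := by rw [hCB]
    rw [Matrix.mul_apply, Matrix.one_apply] at h0
    by_cases hlm : l = m
    · rw [if_pos hlm]
      rw [if_pos hlm] at h0
      exact_mod_cast congrArg (fun (t : ℤ) => (t : ℝ)) h0
    · rw [if_neg hlm]
      rw [if_neg hlm] at h0
      exact_mod_cast congrArg (fun (t : ℤ) => (t : ℝ)) h0
  have hcaleq : g j = ∑ i, (∑ k, g k * (d k i : ℝ)) * (B i j : ℝ) := by
    calc g j = ∑ k, g k * (if k = j then (1:ℝ) else 0) := by simp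
    _ = ∑ k, g k * (∑ i, (d k i : ℝ) * (B i j : ℝ)) := by
        refine Finset.sum_congr rfl (fun k _ => ?_)
        rw [hBC k j]
    _ = ∑ k, ∑ i, g k * (d k i : ℝ) * (B i j : ℝ) := by
        refine Finset.sum_congr rfl (fun k _ => ?_)
        rw [Finset.mul_sum]
        refine Finset.sum_congr rfl (fun i _ => ?_)
        ring
    _ = ∑ i, ∑ k, g k * (d k i : ℝ) * (B i j : ℝ) := Finset.sum_comm
    _ = ∑ i, (∑ k, g k * (d k i : ℝ)) * (B i j : ℝ) := by
        refine Finset.sum_congr rfl (fun i _ => ?_)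
        rw [Finset.sum_mul]
  rw [hcaleq]
  simp only [hsum, zero_mul, Finset.sum_const_zero]

end EdgeLen
namespace EdgeLen

variable {n : ℕ}

/-- The full local package at a vertex of a monotone polytope: edges with vertex
endpoints, primitive directions and lattice lengths, dual facet normals supporting
`P` at level `1`, and the coordinate expansion in the edge basis. -/
lemma vertex_package {P : Set (Fin n → ℝ)} {V : Finset (Fin n → ℝ)}
    (hPdef : P = convexHull ℝ (V : Set (Fin n → ℝ)))
    (hlat : ∀ v ∈ V, IsLatticePt v)
    (hsm : IsSmoothPolytope P) (hrefl : IsReflexivePolytope P)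
    {x : Fin n → ℝ} (hx : IsVertexOf P x) :
    ∃ (d u : Fin n → Fin n → ℤ) (b : Fin n → Fin n → ℝ) (L : Fin n → ℕ),
      (∀ k, IsPrimitiveZ (d k)) ∧
      (∀ k, IsVertexOf P (b k)) ∧
      (∀ k, IsEdgeOf P (segment ℝ x (b k))) ∧
      (∀ k, LatticeLength x (b k) (L k)) ∧
      (∀ k i, b k i - x i = (L k : ℝ) * (d k i : ℝ)) ∧
      (∀ k, 1 ≤ L k) ∧
      (∀ E', IsEdgeOf P E' → x ∈ E' → ∃ k, E' = segment ℝ x (b k)) ∧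
      (∀ k j, intDot (u k) (d j) = if k = j then -1 else 0) ∧
      (∀ k, ∀ y ∈ P, dotZ (u k) y ≤ 1) ∧
      (∀ k, dotZ (u k) x = 1) ∧
      (∀ z : Fin n → ℝ, ∀ i, z i = ∑ j, (-(dotZ (u j) z)) * (d j i : ℝ)) := by
  obtain ⟨-, E0, d0, hE0inj, hE0data, hE0compl, hdet⟩ := hsm x hx
  obtain ⟨hxP, f, hfmax, hfstrict⟩ := vertex_strict hx
  have hxV : x ∈ V := vertex_mem_V (hPdef ▸ hx)
  have hVne : V.Nonempty := ⟨x, hxV⟩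
  -- endpoints of the edges at x
  have hbex : ∀ k, ∃ y, y ≠ x ∧ E0 k = segment ℝ x y := fun k =>
    edge_endpoints (hE0data k).1 hx (hE0data k).2.1
  choose b hbne hbseg using hbex
  have hbvert : ∀ k, IsVertexOf P (b k) := by
    intro k
    rw [hPdef]
    refine endpoint_vertex hVne (fun hc => hbne k hc.symm) ?_
    rw [← hbseg k]
    exact hPdef ▸ (hE0data k).1.1
  have hbedge : ∀ k, IsEdgeOf P (segment ℝ x (b k)) := by
    intro k
    rw [← hbseg k]
    exact (hE0data k).1
  have hcompl2 : ∀ E', IsEdgeOf P E' → x ∈ E' → ∃ k, E' = segment ℝ x (b k) := by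
    intro E' hE' hxE'
    obtain ⟨k, hk⟩ := hE0compl E' hE' hxE'
    exact ⟨k, by rw [hk, hbseg k]⟩
  -- lattice lengths and directions
  have hmain : ∀ k, ∃ L : ℕ, 1 ≤ L ∧
      (∀ i, b k i - x i = (L : ℝ) * (d0 k i : ℝ)) := by
    intro k
    obtain ⟨z, hz⟩ := lattice_diff (hlat x hxV) (hlat (b k) (vertex_mem_V (hPdef ▸ hbvert k)))
    have hzne : ∃ i, z i ≠ 0 := by
      by_contra hc
      push_neg at hc
      apply hbne k
      funext i
      have := hz i
      rw [hc i] at this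
      simp at this
      linarith
    obtain ⟨L, d', hL1, hd'prim, hzd⟩ := gcd_split hzne
    obtain ⟨hprim0, w', hw'E, t, ht, hw'⟩ := (hE0data k).2.2
    rw [hbseg k] at hw'E
    obtain ⟨θ, hθ0, hθ1, hw'θ⟩ := seg_mem_iff.mp hw'E
    have hθpos : 0 < θ := by
      rcases eq_or_lt_of_le hθ0 with h | h
      case inr => exact h
      · exfalso
        obtain ⟨i0, hi0⟩ := prim_exists_ne_zero hprim0
        have h1 := hw' i0
        rw [hw'θ] at h1
        rw [← h] at h1
        simp at h1
        rcases h1 with h1 | h1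
        · linarith
        · exact hi0 (by exact_mod_cast h1)
    have hrel : ∀ i, t * (d0 k i : ℝ) = θ * ((L : ℝ) * (d' i : ℝ)) := by
      intro i
      have h1 := hw' i
      rw [hw'θ] at h1
      have h2 : (x + θ • (b k - x)) i - x i = θ * (b k i - x i) := by
        simp [Pi.add_apply, Pi.smul_apply, Pi.sub_apply, smul_eq_mul]
      rw [h2] at h1
      have h3 : b k i - x i = (L : ℝ) * (d' i : ℝ) := by
        rw [hz i, hzd i]; push_cast; ring
      rw [h3] at h1
      linarith
    have hLpos : (0:ℝ) < (L:ℝ) := by exact_mod_cast hL1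
    have hald : d0 k = d' := by
      refine prim_eq hprim0 hd'prim (α := θ * (L : ℝ) / t) ?_ ?_
      · positivity
      · intro i
        have := hrel i
        field_simp
        nlinarith [hrel i]
    refine ⟨L, hL1, fun i => ?_⟩
    rw [hz i, hzd i, hald]
    push_cast
    ring
  choose L hL1 hbd using hmain
  have hlatlen : ∀ k, LatticeLength x (b k) (L k) :=
    fun k => ⟨d0 k, (hE0data k).2.2.1, hbd k⟩
  -- matrix inverse and dual normals
  set C : Matrix (Fin n) (Fin n) ℤ := Matrix.of d0 with hC
  have hdet' : IsUnit C.det := hdet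
  set B : Matrix (Fin n) (Fin n) ℤ := C⁻¹ with hB
  have hBC : B * C = 1 := Matrix.nonsing_inv_mul C hdet'
  have hCB : C * B = 1 := Matrix.mul_nonsing_inv C hdet'
  set u : Fin n → Fin n → ℤ := fun k => fun i => -(B i k) with hu
  have hdual : ∀ k j, intDot (u k) (d0 j) = if k = j then -1 else 0 := by
    intro k j
    have h1 : intDot (u k) (d0 j) = -((C * B) j k) := by
      rw [intDot, Matrix.mul_apply]
      rw [← Finset.sum_neg_distrib]
      refine Finset.sum_congr rfl (fun i _ => ?_)
      show -(B i k) * d0 j i = -(C j i * B i k)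
      show -(B i k) * d0 j i = -(d0 j i * B i k)
      ring
    rw [h1, hCB, Matrix.one_apply]
    by_cases hkj : k = j
    · rw [if_pos hkj, if_pos hkj.symm]
    · rw [if_neg hkj, if_neg (Ne.symm hkj)]
      ring
  have hdotu : ∀ k (y : Fin n → ℝ), dotZ (u k) y = -(∑ i, (B i k : ℝ) * y i) := by
    intro k y
    rw [dotZ, ← Finset.sum_neg_distrib]
    refine Finset.sum_congr rfl (fun i _ => ?_)
    show ((u k i : ℤ) : ℝ) * y i = -((B i k : ℝ) * y i)
    have : (u k i : ℤ) = -(B i k) := rfl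
    rw [this]; push_cast; ring
  -- tangent cone: u k is maximized at x over P
  have hTC : ∀ k, ∀ y ∈ P, dotZ (u k) y ≤ dotZ (u k) x := by
    intro k
    have hh : ∀ j, 0 ≤ dotR (fun i => (B i k : ℝ)) (fun i => (d0 j i : ℝ)) := by
      intro j
      have h1 : dotR (fun i => (B i k : ℝ)) (fun i => (d0 j i : ℝ))
          = ((C * B) j k : ℤ) := by
        rw [dotR, Matrix.mul_apply]
        push_cast
        refine Finset.sum_congr rfl (fun i _ => ?_)
        show (B i k : ℝ) * (d0 j i : ℝ) = (d0 j i : ℝ) * (B i k : ℝ)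
        ring
      rw [h1, hCB, Matrix.one_apply]
      by_cases hkj : j = k <;> simp [hkj]
    have := tangent_cone (hPdef ▸ hx) b d0 L
      (fun k i => hbd k i) hL1
      (fun E' hE' hxE' => hcompl2 E' (hPdef ▸ hE') hxE')
      (fun i => (B i k : ℝ)) hh
    intro y hy
    have h2 := this y (hPdef ▸ hy)
    rw [hdotu, hdotu]
    have h3 : dotR (fun i => (B i k : ℝ)) x ≤ dotR (fun i => (B i k : ℝ)) y := h2
    rw [dotR] at h3
    rw [dotR] at h3
    linarith
  -- points b j lie on the facet of u k for j ≠ k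
  have hbP : ∀ k, b k ∈ P := fun k => (vertex_strict (hbvert k)).1
  have hbval : ∀ k j, dotZ (u k) (b j) = dotZ (u k) x + (L j : ℝ) * (intDot (u k) (d0 j) : ℝ) := by
    intro k j
    have hbj : b j = fun i => x i + (L j : ℝ) * (d0 j i : ℝ) := by
      funext i
      have := hbd j i
      linarith
    rw [hbj, dotZ_affine (u k) x (fun i => (d0 j i : ℝ)) ((L j : ℝ)), dotZ_intDot]
  -- the facet and reflexivity
  have hval1 : ∀ k, dotZ (u k) x = 1 := by
    intro k
    set F : Set (Fin n → ℝ) := {y ∈ P | ∀ y' ∈ P, dotZ (u k) y' ≤ dotZ (u k) y} with hF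
    have hxF : x ∈ F := ⟨hxP, hTC k⟩
    have hFval : ∀ y ∈ F, dotZ (u k) y = dotZ (u k) x := by
      rintro y ⟨hyP, hymax⟩
      exact le_antisymm (hTC k y hyP) (hymax x hxP)
    have hdim : dimSet F + 1 = n := by
      refine facet_dim (u := u k) hxF (fun j => (fun i => (d0 j i : ℝ))) (rows_linearIndependent hCB) k
        ?_ ?_ ?_
      · intro j hjk
        refine ⟨b j, ?_, (L j : ℝ), by exact_mod_cast hL1 j, fun i => hbd j i⟩
        refine ⟨hbP j, fun y' hy' => ?_⟩
        have h1 := hTC k y' hy'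
        have h2 := hbval k j
        rw [hdual] at h2
        rw [if_neg (Ne.symm hjk)] at h2
        simp at h2
        linarith
      · intro y hy y' hy'
        rw [hFval y hy, hFval y' hy']
      · have h1 : dotR (fun i => ((u k i : ℤ) : ℝ)) (fun i => (d0 k i : ℝ))
            = (intDot (u k) (d0 k) : ℝ) := by
          rw [← dotZ_cast, dotZ_intDot]
        rw [h1, hdual, if_pos rfl]
        norm_num
    have hfacet : IsFacetOf P F := by
      refine ⟨⟨fun i => ((u k i : ℤ) : ℝ), ?_⟩, ⟨x, hxF⟩, hdim⟩
      rw [hF]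
      rfl
    have hprimu : IsPrimitiveZ (u k) := by
      apply prim_of_intDot_neg_one (d := d0 k)
      rw [hdual, if_pos rfl]
    exact hrefl.2 F (u k) ⟨hprimu, hfacet, rfl⟩ x hxF
  have hboundP : ∀ k, ∀ y ∈ P, dotZ (u k) y ≤ 1 := by
    intro k y hy
    rw [← hval1 k]
    exact hTC k y hy
  -- expansion in the edge basis
  have hexpand : ∀ (z : Fin n → ℝ) (i : Fin n), z i = ∑ j, (-(dotZ (u j) z)) * (d0 j i : ℝ) := by
    intro z i
    have hBCe : ∀ l m : Fin n, ∑ j, (B l j : ℝ) * (C j m : ℝ) = if l = m then 1 else 0 := by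
      intro l m
      have h0 : (B * C) l m = (1 : Matrix (Fin n) (Fin n) ℤ) l m := by rw [hBC]
      rw [Matrix.mul_apply, Matrix.one_apply] at h0
      by_cases hlm : l = m
      · rw [if_pos hlm]
        rw [if_pos hlm] at h0
        exact_mod_cast congrArg (fun (t : ℤ) => (t : ℝ)) h0
      · rw [if_neg hlm]
        rw [if_neg hlm] at h0
        exact_mod_cast congrArg (fun (t : ℤ) => (t : ℝ)) h0
    calc z i = ∑ l, z l * (if l = i then (1:ℝ) else 0) := by simp
    _ = ∑ l, z l * (∑ j, (B l j : ℝ) * (C j i : ℝ)) := by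
        refine Finset.sum_congr rfl (fun l _ => ?_)
        rw [hBCe l i]
    _ = ∑ l, ∑ j, z l * ((B l j : ℝ) * (C j i : ℝ)) := by
        refine Finset.sum_congr rfl (fun l _ => ?_)
        rw [Finset.mul_sum]
    _ = ∑ j, ∑ l, z l * ((B l j : ℝ) * (C j i : ℝ)) := Finset.sum_comm
    _ = ∑ j, (-(dotZ (u j) z)) * (d0 j i : ℝ) := by
        refine Finset.sum_congr rfl (fun j _ => ?_)
        rw [hdotu j z]
        have hCji : (C j i : ℤ) = d0 j i := rfl
        rw [neg_neg, Finset.sum_mul]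
        rw [← hCji]
        refine Finset.sum_congr rfl (fun l _ => ?_)
        ring
  exact ⟨d0, u, b, L, (fun k => (hE0data k).2.2.1), hbvert, hbedge, hlatlen, hbd, hL1,
    hcompl2, hdual, hboundP, hval1, hexpand⟩

end EdgeLen
namespace EdgeLen

variable {n : ℕ}

lemma intDot_neg_right (a c : Fin n → ℤ) : intDot a (fun i => -(c i)) = -(intDot a c) := by
  rw [intDot, intDot, ← Finset.sum_neg_distrib]
  exact Finset.sum_congr rfl (fun i _ => by ring)

lemma dotZ_shift (U : Fin n → ℤ) {p q : Fin n → ℝ} {c : Fin n → ℤ} {t : ℝ}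
    (h : ∀ i, q i - p i = t * (c i : ℝ)) :
    dotZ U q = dotZ U p + t * (intDot U c : ℝ) := by
  have hq : q = fun i => p i + t * (c i : ℝ) := funext fun i => by linarith [h i]
  rw [hq, dotZ_affine, dotZ_intDot]

lemma dotZ_expand_sum (U : Fin n → ℤ) (z : Fin n → ℝ) (coef : Fin n → ℝ)
    (d : Fin n → Fin n → ℤ) (hz : ∀ i, z i = ∑ j, coef j * (d j i : ℝ)) :
    dotZ U z = ∑ j, coef j * (intDot U (d j) : ℝ) := by
  calc dotZ U z = ∑ i, (U i : ℝ) * z i := rfl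
  _ = ∑ i, ∑ j, coef j * ((U i : ℝ) * (d j i : ℝ)) := by
      refine Finset.sum_congr rfl (fun i _ => ?_)
      rw [hz i, Finset.mul_sum]
      exact Finset.sum_congr rfl (fun j _ => by ring)
  _ = ∑ j, ∑ i, coef j * ((U i : ℝ) * (d j i : ℝ)) := Finset.sum_comm
  _ = ∑ j, coef j * (intDot U (d j) : ℝ) := by
      refine Finset.sum_congr rfl (fun j _ => ?_)
      rw [← Finset.mul_sum]
      congr 1
      rw [intDot]
      push_cast
      rfl

lemma intDot_expand (A : Fin n → ℤ) (em : Fin n → ℤ) (γ : Fin n → ℤ)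
    (d : Fin n → Fin n → ℤ) (h : ∀ i, em i = ∑ j, γ j * d j i) :
    intDot A em = ∑ j, γ j * intDot A (d j) := by
  calc intDot A em = ∑ i, A i * em i := rfl
  _ = ∑ i, ∑ j, γ j * (A i * d j i) := by
      refine Finset.sum_congr rfl (fun i _ => ?_)
      rw [h i, Finset.mul_sum]
      exact Finset.sum_congr rfl (fun j _ => by ring)
  _ = ∑ j, ∑ i, γ j * (A i * d j i) := Finset.sum_comm
  _ = ∑ j, γ j * intDot A (d j) := by
      refine Finset.sum_congr rfl (fun j _ => ?_)
      rw [← Finset.mul_sum, intDot]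

end EdgeLen
open EdgeLen in
set_option maxHeartbeats 1600000 in
/-- Lemma 4.3: if every edge of a monotone polytope `P ⊆ ℝ^n`
incident to a vertex `v` has lattice length at least `n`, then every such edge
has lattice length `n` or `n + 1`. -/
theorem edge_lengths_at_blowupable_vertex {n : ℕ} (P : Set (Fin n → ℝ))
    (hP : IsMonotonePolytope P) (v : Fin n → ℝ) (hv : IsVertexOf P v)
    (hlong : ∀ w ℓ, IsVertexOf P w → IsEdgeOf P (segment ℝ v w) →
      LatticeLength v w ℓ → n ≤ ℓ) :
    ∀ w ℓ, IsVertexOf P w → IsEdgeOf P (segment ℝ v w) →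
      LatticeLength v w ℓ → ℓ = n ∨ ℓ = n + 1 := by
  intro w ℓ hw hEdge hLen
  rcases Nat.eq_zero_or_pos n with hn0 | hnpos
  · obtain ⟨-, a, bb, hab, -⟩ := hEdge
    exfalso
    apply hab
    funext i
    exact absurd i.2 (by omega)
  obtain ⟨⟨V, hlat, hPdef, -⟩, hsm, hrefl⟩ := hP
  obtain ⟨d, u, b, L, hdprim, hbvert, hbedge, hblen, hbd, hL1, hcompl, hdual, hbound,
    hval, hexpand⟩ := EdgeLen.vertex_package hPdef hlat hsm hrefl hv
  -- w ≠ v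
  have hwv : w ≠ v := by
    intro hc
    obtain ⟨-, a, bb, hab, hseg⟩ := hEdge
    rw [hc] at hseg
    have ha : a ∈ segment ℝ v v := by rw [hseg]; exact left_mem_segment ℝ a bb
    have hb2 : bb ∈ segment ℝ v v := by rw [hseg]; exact right_mem_segment ℝ a bb
    rw [segment_same] at ha hb2
    exact hab (ha.trans hb2.symm)
  -- identify the given edge with a package edge
  obtain ⟨k₀, hk₀⟩ := hcompl _ hEdge (left_mem_segment ℝ v w)
  have hwb : w = b k₀ := seg_cancel hwv hk₀
  -- identify ℓ with L k₀
  obtain ⟨dd, hddprim, hddrel⟩ := hLen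
  have hl0 : 1 ≤ ℓ := by
    by_contra hc
    apply hwv
    funext i
    have h1 := hddrel i
    have hz : ℓ = 0 := by omega
    rw [hz] at h1
    push_cast at h1
    linarith
  have hwbd : ∀ i, w i - v i = (L k₀ : ℝ) * (d k₀ i : ℝ) := by
    intro i
    rw [hwb]
    exact hbd k₀ i
  have hdd : dd = d k₀ := by
    refine prim_eq hddprim (hdprim k₀) (α := (L k₀ : ℝ) / (ℓ : ℝ)) ?_ ?_
    · apply div_pos
      · exact_mod_cast hL1 k₀
      · exact_mod_cast hl0
    · intro i
      have h1 := hddrel i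
      have h2 := hwbd i
      have hlne : (ℓ : ℝ) ≠ 0 := by positivity
      field_simp
      nlinarith
  have hlL : ℓ = L k₀ := by
    obtain ⟨i, hi⟩ := prim_exists_ne_zero (hdprim k₀)
    have h1 := hddrel i
    have h2 := hwbd i
    rw [hdd] at h1
    have hine : (d k₀ i : ℝ) ≠ 0 := Int.cast_ne_zero.mpr hi
    have hc : (ℓ : ℝ) = (L k₀ : ℝ) := by
      have h3 : (ℓ : ℝ) * (d k₀ i : ℝ) = (L k₀ : ℝ) * (d k₀ i : ℝ) := by linarith
      exact mul_right_cancel₀ hine h3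
    exact_mod_cast hc
  -- all package edge lengths are ≥ n
  have hLn : ∀ k, n ≤ L k := fun k => hlong (b k) (L k) (hbvert k) (hbedge k) (hblen k)
  rw [hlL]
  by_contra hcon
  push_neg at hcon
  have hLk₀ : n + 2 ≤ L k₀ := by
    have := hLn k₀
    omega
  -- package at the vertex w
  obtain ⟨d', u', b', L', hdprim', hbvert', hbedge', hblen', hbd', hL1', hcompl', hdual',
    hbound', hval', hexpand'⟩ := EdgeLen.vertex_package hPdef hlat hsm hrefl hw
  have hEdge2 : IsEdgeOf P (segment ℝ w v) := by rw [segment_symm]; exact hEdge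
  obtain ⟨m₀, hm₀⟩ := hcompl' _ hEdge2 (left_mem_segment ℝ w v)
  have hvb' : v = b' m₀ := seg_cancel (Ne.symm hwv) hm₀
  -- direction of the back edge at w
  have hL'pos : (0:ℝ) < (L' m₀ : ℝ) := by exact_mod_cast hL1' m₀
  have hdneg : d' m₀ = fun i => -(d k₀ i) := by
    refine prim_eq (hdprim' m₀) (prim_neg (hdprim k₀))
      (α := (L k₀ : ℝ) / (L' m₀ : ℝ)) (div_pos (by exact_mod_cast hL1 k₀) hL'pos) ?_
    intro i
    have h1 := hbd' m₀ i
    rw [← hvb'] at h1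
    have h2 := hwbd i
    have hne : (L' m₀ : ℝ) ≠ 0 := ne_of_gt hL'pos
    push_cast
    field_simp
    nlinarith
  have hUd : intDot (u' m₀) (d k₀) = 1 := by
    have h1 := hdual' m₀ m₀
    rw [if_pos rfl, hdneg] at h1
    have h2 := intDot_neg_right (u' m₀) (d k₀)
    omega
  have hUw : dotZ (u' m₀) w = 1 := hval' m₀
  have hvwd : ∀ i, v i - w i = (L k₀ : ℝ) * ((-(d k₀ i) : ℤ) : ℝ) := by
    intro i
    have := hwbd i
    push_cast
    linarith
  have hUv : dotZ (u' m₀) v = 1 - (L k₀ : ℝ) := by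
    have h1 := dotZ_shift (u' m₀) hvwd
    rw [hUw, intDot_neg_right, hUd] at h1
    rw [h1]
    push_cast
    ring
  -- the center identity v = -∑ d j
  have hcenter : ∀ i, v i = ∑ j, (-1 : ℝ) * (d j i : ℝ) := by
    intro i
    have h1 := hexpand v i
    rw [h1]
    exact Finset.sum_congr rfl (fun j _ => by rw [hval j])
  -- the sum of the β j := intDot (u' m₀) (d j)
  have hβsum : ∑ j, intDot (u' m₀) (d j) = (L k₀ : ℤ) - 1 := by
    have h1 := dotZ_expand_sum (u' m₀) v (fun _ => (-1 : ℝ)) d hcenter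
    rw [hUv] at h1
    have h2 : (1 : ℝ) - (L k₀ : ℝ) = -(∑ j, ((intDot (u' m₀) (d j) : ℤ) : ℝ)) := by
      rw [h1, ← Finset.sum_neg_distrib]
      exact Finset.sum_congr rfl (fun j _ => by ring)
    have h3 : (∑ j, ((intDot (u' m₀) (d j) : ℤ) : ℝ)) = (L k₀ : ℝ) - 1 := by linarith
    exact_mod_cast h3
  have hbP : ∀ k, b k ∈ P := fun k => (vertex_strict (hbvert k)).1
  have hβbnd : ∀ j, (L j : ℤ) * intDot (u' m₀) (d j) ≤ (L k₀ : ℤ) := by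
    intro j
    have h1 : dotZ (u' m₀) (b j) ≤ 1 := hbound' m₀ (b j) (hbP j)
    have h2 := dotZ_shift (u' m₀) (hbd j)
    rw [hUv] at h2
    have h3 : (L j : ℝ) * ((intDot (u' m₀) (d j) : ℤ) : ℝ) ≤ (L k₀ : ℝ) := by
      rw [h2] at h1
      linarith
    exact_mod_cast h3
  -- arithmetic forcing: L k₀ = 2n, β j = 2 and L j = n for j ≠ k₀
  have hcard : (Finset.univ.erase k₀).card = n - 1 := by
    rw [Finset.card_erase_of_mem (Finset.mem_univ k₀), Finset.card_univ, Fintype.card_fin]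
  have hT : ∑ j ∈ Finset.univ.erase k₀, intDot (u' m₀) (d j) = (L k₀ : ℤ) - 2 := by
    have h1 := Finset.sum_erase_add Finset.univ (fun j => intDot (u' m₀) (d j))
      (Finset.mem_univ k₀)
    rw [hUd] at h1
    rw [hβsum] at h1
    omega
  have hA2n : (L k₀ : ℤ) ≤ 2 * n := by
    have hnb : ∀ j ∈ Finset.univ.erase k₀, (n : ℤ) * intDot (u' m₀) (d j) ≤ (L k₀ : ℤ) := by
      intro j _
      rcases le_or_gt (intDot (u' m₀) (d j)) 0 with h | h
      · have h1 : (n : ℤ) * intDot (u' m₀) (d j) ≤ 0 :=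
          mul_nonpos_of_nonneg_of_nonpos (by positivity) h
        have h2 : (0 : ℤ) ≤ (L k₀ : ℤ) := by positivity
        omega
      · have h2 : (n : ℤ) ≤ (L j : ℤ) := by exact_mod_cast hLn j
        have h3 : (n : ℤ) * intDot (u' m₀) (d j) ≤ (L j : ℤ) * intDot (u' m₀) (d j) :=
          mul_le_mul_of_nonneg_right h2 (by omega)
        exact h3.trans (hβbnd j)
    have hs : ∑ j ∈ Finset.univ.erase k₀, (n : ℤ) * intDot (u' m₀) (d j)
        ≤ (Finset.univ.erase k₀).card • (L k₀ : ℤ) :=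
      Finset.sum_le_card_nsmul _ _ _ hnb
    rw [hcard, nsmul_eq_mul, ← Finset.mul_sum, hT] at hs
    have hn1 : ((n - 1 : ℕ) : ℤ) = (n : ℤ) - 1 := by omega
    rw [hn1] at hs
    nlinarith [hs]
  have hA : (L k₀ : ℤ) = 2 * n := by
    by_contra hc
    have hb1 : ∀ j ∈ Finset.univ.erase k₀, intDot (u' m₀) (d j) ≤ 1 := by
      intro j _
      by_contra hb
      push_neg at hb
      have h2 : (n : ℤ) ≤ (L j : ℤ) := by exact_mod_cast hLn j
      have h3 : 2 * (L j : ℤ) ≤ (L j : ℤ) * intDot (u' m₀) (d j) := by nlinarith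
      have h4 := hβbnd j
      have h5 : (n : ℤ) + 2 ≤ (L k₀ : ℤ) := by exact_mod_cast hLk₀
      omega
    have hs : ∑ j ∈ Finset.univ.erase k₀, intDot (u' m₀) (d j)
        ≤ (Finset.univ.erase k₀).card • (1 : ℤ) :=
      Finset.sum_le_card_nsmul _ _ _ hb1
    rw [hcard, nsmul_eq_mul, mul_one, hT] at hs
    have hn1 : ((n - 1 : ℕ) : ℤ) = (n : ℤ) - 1 := by omega
    rw [hn1] at hs
    have h5 : (n : ℤ) + 2 ≤ (L k₀ : ℤ) := by exact_mod_cast hLk₀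
    omega
  have hn2 : 2 ≤ n := by
    have h5 : (n : ℤ) + 2 ≤ (L k₀ : ℤ) := by exact_mod_cast hLk₀
    omega
  have hβ2 : ∀ j ∈ Finset.univ.erase k₀, intDot (u' m₀) (d j) = 2 := by
    have hble : ∀ j ∈ Finset.univ.erase k₀, intDot (u' m₀) (d j) ≤ 2 := by
      intro j _
      by_contra hb
      push_neg at hb
      have h2 : (n : ℤ) ≤ (L j : ℤ) := by exact_mod_cast hLn j
      have h3 : 3 * (n : ℤ) ≤ (L j : ℤ) * intDot (u' m₀) (d j) := by nlinarith
      have h4 := hβbnd j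
      omega
    intro j hj
    have hzero : ∑ j ∈ Finset.univ.erase k₀, ((2 : ℤ) - intDot (u' m₀) (d j)) = 0 := by
      rw [Finset.sum_sub_distrib, hT, Finset.sum_const, hcard, nsmul_eq_mul]
      have hn1 : ((n - 1 : ℕ) : ℤ) = (n : ℤ) - 1 := by omega
      rw [hn1]
      omega
    have h6 := (Finset.sum_eq_zero_iff_of_nonneg
      (fun j hj => by linarith [hble j hj])).mp hzero j hj
    omega
  have hLjn : ∀ j ∈ Finset.univ.erase k₀, L j = n := by
    intro j hj
    have h1 := hβbnd j
    rw [hβ2 j hj, hA] at h1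
    have h2 : (L j : ℤ) ≤ (n : ℤ) := by omega
    have h3 := hLn j
    have h4 : L j ≤ n := by exact_mod_cast h2
    omega
  -- pick k₁ ≠ k₀
  have hk₁ex : (Finset.univ.erase k₀).Nonempty := by
    rw [← Finset.card_pos, hcard]
    omega
  obtain ⟨k₁, hk₁⟩ := hk₁ex
  have hk₁ne : k₁ ≠ k₀ := (Finset.mem_erase.mp hk₁).1
  have hLk₁ : L k₁ = n := hLjn k₁ hk₁
  have hβk₁ : intDot (u' m₀) (d k₁) = 2 := hβ2 k₁ hk₁
  -- package at the vertex b k₁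
  obtain ⟨e, u'', b'', L'', heprim, hbvert'', hbedge'', hblen'', hbd'', hL1'', hcompl'',
    hdual'', hbound'', hval'', hexpand''⟩ :=
    EdgeLen.vertex_package hPdef hlat hsm hrefl (hbvert k₁)
  have hvbk₁ : v ≠ b k₁ := by
    obtain ⟨i, hi⟩ := prim_exists_ne_zero (hdprim k₁)
    intro hc
    have h1 := hbd k₁ i
    rw [← hc] at h1
    have h2 : (L k₁ : ℝ) * (d k₁ i : ℝ) = 0 := by linarith
    have hLpos : (0:ℝ) < (L k₁ : ℝ) := by exact_mod_cast hL1 k₁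
    have h3 : (d k₁ i : ℝ) ≠ 0 := Int.cast_ne_zero.mpr hi
    rcases mul_eq_zero.mp h2 with h | h
    · linarith
    · exact h3 h
  have hEdge3 : IsEdgeOf P (segment ℝ (b k₁) v) := by
    rw [segment_symm]; exact hbedge k₁
  obtain ⟨m₁, hm₁⟩ := hcompl'' _ hEdge3 (left_mem_segment ℝ (b k₁) v)
  have hvb'' : v = b'' m₁ := seg_cancel hvbk₁ hm₁
  have hL''pos : (0:ℝ) < (L'' m₁ : ℝ) := by exact_mod_cast hL1'' m₁
  have heneg : e m₁ = fun i => -(d k₁ i) := by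
    refine prim_eq (heprim m₁) (prim_neg (hdprim k₁))
      (α := (L k₁ : ℝ) / (L'' m₁ : ℝ)) (div_pos (by exact_mod_cast hL1 k₁) hL''pos) ?_
    intro i
    have h1 := hbd'' m₁ i
    rw [← hvb''] at h1
    have h2 := hbd k₁ i
    have hne : (L'' m₁ : ℝ) ≠ 0 := ne_of_gt hL''pos
    push_cast
    field_simp
    nlinarith
  have hU'd : intDot (u'' m₁) (d k₁) = 1 := by
    have h1 := hdual'' m₁ m₁
    rw [if_pos rfl, heneg] at h1
    have h2 := intDot_neg_right (u'' m₁) (d k₁)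
    omega
  have hU'B : dotZ (u'' m₁) (b k₁) = 1 := hval'' m₁
  have hvBd : ∀ i, v i - b k₁ i = (L k₁ : ℝ) * ((-(d k₁ i) : ℤ) : ℝ) := by
    intro i
    have := hbd k₁ i
    push_cast
    linarith
  have hU'v : dotZ (u'' m₁) v = 1 - (n : ℝ) := by
    have h1 := dotZ_shift (u'' m₁) hvBd
    rw [hU'B, intDot_neg_right, hU'd, hLk₁] at h1
    rw [h1]
    push_cast
    ring
  have hβ'sum : ∑ j, intDot (u'' m₁) (d j) = (n : ℤ) - 1 := by
    have h1 := dotZ_expand_sum (u'' m₁) v (fun _ => (-1 : ℝ)) d hcenter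
    rw [hU'v] at h1
    have h2 : (1 : ℝ) - (n : ℝ) = -(∑ j, ((intDot (u'' m₁) (d j) : ℤ) : ℝ)) := by
      rw [h1, ← Finset.sum_neg_distrib]
      exact Finset.sum_congr rfl (fun j _ => by ring)
    have h3 : (∑ j, ((intDot (u'' m₁) (d j) : ℤ) : ℝ)) = (n : ℝ) - 1 := by linarith
    exact_mod_cast h3
  have hβ'bnd : ∀ j, (L j : ℤ) * intDot (u'' m₁) (d j) ≤ (n : ℤ) := by
    intro j
    have h1 : dotZ (u'' m₁) (b j) ≤ 1 := hbound'' m₁ (b j) (hbP j)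
    have h2 := dotZ_shift (u'' m₁) (hbd j)
    rw [hU'v] at h2
    have h3 : (L j : ℝ) * ((intDot (u'' m₁) (d j) : ℤ) : ℝ) ≤ (n : ℝ) := by
      rw [h2] at h1
      linarith
    exact_mod_cast h3
  -- forcing the values of β' j
  have hβ'k₀le : intDot (u'' m₁) (d k₀) ≤ 0 := by
    have h1 := hβ'bnd k₀
    rw [hA] at h1
    by_contra hb
    push_neg at hb
    nlinarith
  have hβ'le : ∀ j, j ≠ k₀ → j ≠ k₁ → intDot (u'' m₁) (d j) ≤ 1 := by
    intro j hjk₀ hjk₁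
    have h1 := hβ'bnd j
    rw [hLjn j (Finset.mem_erase.mpr ⟨hjk₀, Finset.mem_univ j⟩)] at h1
    by_contra hb
    push_neg at hb
    nlinarith
  have hk₀mem : k₀ ∈ Finset.univ.erase k₁ :=
    Finset.mem_erase.mpr ⟨fun hc => hk₁ne hc.symm, Finset.mem_univ k₀⟩
  have hcardS : ((Finset.univ.erase k₁).erase k₀).card = n - 2 := by
    rw [Finset.card_erase_of_mem hk₀mem, Finset.card_erase_of_mem (Finset.mem_univ k₁),
      Finset.card_univ, Fintype.card_fin]
    omega
  have hsplit : intDot (u'' m₁) (d k₁) + (intDot (u'' m₁) (d k₀)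
      + ∑ j ∈ (Finset.univ.erase k₁).erase k₀, intDot (u'' m₁) (d j))
      = ∑ j, intDot (u'' m₁) (d j) := by
    rw [Finset.add_sum_erase _ (fun j => intDot (u'' m₁) (d j)) hk₀mem]
    rw [Finset.add_sum_erase _ (fun j => intDot (u'' m₁) (d j)) (Finset.mem_univ k₁)]
  have hSle : ∑ j ∈ (Finset.univ.erase k₁).erase k₀, intDot (u'' m₁) (d j)
      ≤ ((Finset.univ.erase k₁).erase k₀).card • (1 : ℤ) := by
    apply Finset.sum_le_card_nsmul
    intro j hj
    obtain ⟨hjk₀, hj2⟩ := Finset.mem_erase.mp hj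
    obtain ⟨hjk₁, -⟩ := Finset.mem_erase.mp hj2
    exact hβ'le j hjk₀ hjk₁
  rw [hcardS, nsmul_eq_mul, mul_one] at hSle
  have hn2' : ((n - 2 : ℕ) : ℤ) = (n : ℤ) - 2 := by omega
  rw [hn2'] at hSle
  have hβ'k₀ : intDot (u'' m₁) (d k₀) = 0 := by
    rw [hU'd, hβ'sum] at hsplit
    omega
  have hSsum : ∑ j ∈ (Finset.univ.erase k₁).erase k₀, intDot (u'' m₁) (d j)
      = (n : ℤ) - 2 := by
    rw [hU'd, hβ'sum, hβ'k₀] at hsplit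
    omega
  have hβ'S : ∀ j ∈ (Finset.univ.erase k₁).erase k₀, intDot (u'' m₁) (d j) = 1 := by
    intro j hj
    have hzero : ∑ j ∈ (Finset.univ.erase k₁).erase k₀,
        ((1 : ℤ) - intDot (u'' m₁) (d j)) = 0 := by
      rw [Finset.sum_sub_distrib, hSsum, Finset.sum_const, hcardS, nsmul_eq_mul, mul_one, hn2']
      omega
    have h6 := (Finset.sum_eq_zero_iff_of_nonneg (fun j hj => by
      obtain ⟨hjk₀, hj2⟩ := Finset.mem_erase.mp hj
      obtain ⟨hjk₁, -⟩ := Finset.mem_erase.mp hj2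
      linarith [hβ'le j hjk₀ hjk₁])).mp hzero j hj
    omega
  have hβ'all : ∀ j, intDot (u'' m₁) (d j) = if j = k₀ then 0 else 1 := by
    intro j
    by_cases hjk₀ : j = k₀
    · rw [if_pos hjk₀, hjk₀]; exact hβ'k₀
    · rw [if_neg hjk₀]
      by_cases hjk₁ : j = k₁
      · rw [hjk₁]; exact hU'd
      · exact hβ'S j (Finset.mem_erase.mpr ⟨hjk₀, Finset.mem_erase.mpr ⟨hjk₁, Finset.mem_univ j⟩⟩)
  have hβall : ∀ j, intDot (u' m₀) (d j) = if j = k₀ then 1 else 2 := by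
    intro j
    by_cases hjk₀ : j = k₀
    · rw [if_pos hjk₀, hjk₀]; exact hUd
    · rw [if_neg hjk₀]
      exact hβ2 j (Finset.mem_erase.mpr ⟨hjk₀, Finset.mem_univ j⟩)
  -- values of the two functionals at the vertex b k₁
  have hUB : dotZ (u' m₀) (b k₁) = 1 := by
    have h1 := dotZ_shift (u' m₀) (hbd k₁)
    rw [hUv, hβk₁, hLk₁] at h1
    rw [h1]
    have hAr : ((L k₀ : ℕ) : ℝ) = 2 * (n : ℝ) := by exact_mod_cast hA
    rw [hAr]
    push_cast
    ring
  have hu0B : dotZ (u k₀) (b k₁) = 1 := by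
    have h1 := dotZ_shift (u k₀) (hbd k₁)
    rw [hval k₀, hdual, if_neg (fun hc => hk₁ne hc.symm)] at h1
    rw [h1]
    push_cast
    ring
  have hbP'' : ∀ m, b'' m ∈ P := fun m => (vertex_strict (hbvert'' m)).1
  -- each edge direction at b k₁ pairs to zero with u k₀
  have hγ : ∀ m, intDot (u k₀) (e m) = 0 := by
    intro m
    by_cases hm : m = m₁
    · rw [hm, heneg, intDot_neg_right, hdual, if_neg (Ne.symm hk₁ne)]
      norm_num
    · -- expansion of e m in the basis d
      have hexp : ∀ i, (e m) i = ∑ j, (-(intDot (u j) (e m))) * (d j i) := by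
        intro i
        have h1 := hexpand (fun i => ((e m) i : ℝ)) i
        have h2 : ∀ j, dotZ (u j) (fun i => ((e m) i : ℝ)) = (intDot (u j) (e m) : ℝ) :=
          fun j => dotZ_intDot (u j) (e m)
        rw [Finset.sum_congr rfl (fun j _ => by rw [h2 j])] at h1
        have h3 : ((e m i : ℤ) : ℝ)
            = ((∑ j, (-(intDot (u j) (e m))) * (d j i) : ℤ) : ℝ) := by
          rw [h1]
          push_cast
          rfl
        exact_mod_cast h3
      -- nonnegativity of the coefficients γ j = -(intDot (u j) (e m)) for j ≠ k₁
      have hsign : ∀ (A : Fin n → ℤ), dotZ A (b k₁) = 1 → (∀ y ∈ P, dotZ A y ≤ 1) →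
          intDot A (e m) ≤ 0 := by
        intro A hA1 hAle
        have h1 : dotZ A (b'' m) ≤ 1 := hAle (b'' m) (hbP'' m)
        have h2 := dotZ_shift A (hbd'' m)
        rw [hA1] at h2
        rw [h2] at h1
        have hLm : (0:ℝ) < (L'' m : ℝ) := by exact_mod_cast hL1'' m
        by_contra hb
        push_neg at hb
        have hb' : (1 : ℝ) ≤ ((intDot A (e m) : ℤ) : ℝ) := by exact_mod_cast hb
        nlinarith
      have hγk₀ : intDot (u k₀) (e m) ≤ 0 :=
        hsign (u k₀) hu0B (hbound k₀)
      have hU'em : intDot (u'' m₁) (e m) = 0 := by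
        have h1 := hdual'' m₁ m
        rw [if_neg (fun hc => hm hc.symm)] at h1
        exact h1
      have hUem : intDot (u' m₀) (e m) ≤ 0 :=
        hsign (u' m₀) hUB (hbound' m₀)
      -- expand the two pairings
      have hexpU' : intDot (u'' m₁) (e m)
          = ∑ j, (-(intDot (u j) (e m))) * intDot (u'' m₁) (d j) :=
        intDot_expand (u'' m₁) (e m) (fun j => -(intDot (u j) (e m))) d hexp
      have hexpU : intDot (u' m₀) (e m)
          = ∑ j, (-(intDot (u j) (e m))) * intDot (u' m₀) (d j) :=
        intDot_expand (u' m₀) (e m) (fun j => -(intDot (u j) (e m))) d hexp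
      rw [hU'em] at hexpU'
      -- sum over j ≠ k₀ of γ j is zero
      have hsum1 : ∑ j, (-(intDot (u j) (e m))) * (if j = k₀ then (0:ℤ) else 1) = 0 := by
        have hc : ∑ j, (-(intDot (u j) (e m))) * (if j = k₀ then (0:ℤ) else 1)
            = ∑ j, (-(intDot (u j) (e m))) * intDot (u'' m₁) (d j) :=
          Finset.sum_congr rfl (fun j _ => by rw [hβ'all j])
        rw [hc, ← hexpU']
      have hsum2 : intDot (u' m₀) (e m)
          = ∑ j, (-(intDot (u j) (e m))) * (if j = k₀ then (1:ℤ) else 2) := by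
        rw [hexpU]
        exact Finset.sum_congr rfl (fun j _ => by rw [hβall j])
      -- rewrite both sums via the split at k₀
      have hsplit1 : ∀ (c₀ c₁ : ℤ),
          ∑ j, (-(intDot (u j) (e m))) * (if j = k₀ then c₀ else c₁)
          = (-(intDot (u k₀) (e m))) * c₀
            + c₁ * ∑ j ∈ Finset.univ.erase k₀, (-(intDot (u j) (e m))) := by
        intro c₀ c₁
        rw [← Finset.add_sum_erase _ (fun j => (-(intDot (u j) (e m))) * (if j = k₀ then c₀ else c₁))
          (Finset.mem_univ k₀)]
        rw [if_pos rfl, Finset.mul_sum]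
        congr 1
        refine Finset.sum_congr rfl (fun j hj => ?_)
        rw [if_neg (Finset.mem_erase.mp hj).1]
        ring
      rw [hsplit1 0 1] at hsum1
      rw [hsplit1 1 2] at hsum2
      -- conclude γ k₀ = 0
      have hS0 : ∑ j ∈ Finset.univ.erase k₀, (-(intDot (u j) (e m))) = 0 := by omega
      rw [hS0] at hsum2
      omega
  -- final contradiction: u k₀ pairs to zero with everything
  have hfinal : dotZ (u k₀) (fun i => ((d k₀ i : ℤ) : ℝ)) = 0 := by
    have h1 : dotZ (u k₀) (fun i => ((d k₀ i : ℤ) : ℝ))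
        = ∑ m, (-(dotZ (u'' m) (fun i => ((d k₀ i : ℤ) : ℝ))))
          * ((intDot (u k₀) (e m) : ℤ) : ℝ) :=
      dotZ_expand_sum (u k₀) (fun i => ((d k₀ i : ℤ) : ℝ))
        (fun m => -(dotZ (u'' m) (fun i => ((d k₀ i : ℤ) : ℝ)))) e
        (hexpand'' (fun i => ((d k₀ i : ℤ) : ℝ)))
    rw [h1]
    apply Finset.sum_eq_zero
    intro m _
    rw [hγ m]
    norm_num
  rw [dotZ_intDot] at hfinal
  have h2 := hdual k₀ k₀
  rw [if_pos rfl] at h2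
  rw [h2] at hfinal
  norm_num at hfinal
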